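/- arXiv:2503.06731 — 5 statements merged into one kernel-verified Lean document; each statement's English description precedes it below -/
import Mathlib

section
/- Let A be a weak bialgebra over k, and let A^l = ε^l(A) and A^r = ε^r(A) be the images of the maps ε^l(x) = ε(1₍₁₎x)·1₍₂₎ and ε^r(x) = 1₍₁₎·ε(1₍₂₎x). Then A^l and A^r mutually commute in A: for all x ∈ A^l and y ∈ A^r, xy = yx. -/
open TensorProduct

noncomputable section

variable (k A : Type*) [Field k] [Ring A] [Algebra k A] [Coalgebra k A]

/-- `a ⊗ b ↦ a ⊗ (b ⊗ 1)`. -/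
def iota12 : A ⊗[k] A →ₗ[k] A ⊗[k] (A ⊗[k] A) :=
  TensorProduct.map LinearMap.id ((TensorProduct.mk k A A).flip 1)

/-- `a ⊗ b ↦ 1 ⊗ (a ⊗ b)`. -/
def iota23 : A ⊗[k] A →ₗ[k] A ⊗[k] (A ⊗[k] A) :=
  TensorProduct.mk k A (A ⊗[k] A) 1

/-- The axioms of a weak bialgebra on an algebra-coalgebra `A`:
multiplicativity of the comultiplication, the weak counit axiom
`Σ ε(x y₍₁₎) ε(y₍₂₎ z) = ε(xyz) = Σ ε(x y₍₂₎) ε(y₍₁₎ z)`, and the weak unit axiom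
`(Δ(1) ⊗ 1)(1 ⊗ Δ(1)) = (Δ ⊗ id)(Δ(1)) = (1 ⊗ Δ(1))(Δ(1) ⊗ 1)`. -/
structure IsWeakBialgebra : Prop where
  comul_mul : ∀ x y : A,
    Coalgebra.comul (R := k) (x * y) = Coalgebra.comul (R := k) x * Coalgebra.comul (R := k) y
  weak_counit₁ : ∀ x y z : A,
    LinearMap.mul' k k ((TensorProduct.map
      ((Coalgebra.counit : A →ₗ[k] k) ∘ₗ LinearMap.mulLeft k x)
      ((Coalgebra.counit : A →ₗ[k] k) ∘ₗ LinearMap.mulRight k z)) (Coalgebra.comul y))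
      = Coalgebra.counit (x * y * z)
  weak_counit₂ : ∀ x y z : A,
    LinearMap.mul' k k ((TensorProduct.map
      ((Coalgebra.counit : A →ₗ[k] k) ∘ₗ LinearMap.mulRight k z)
      ((Coalgebra.counit : A →ₗ[k] k) ∘ₗ LinearMap.mulLeft k x)) (Coalgebra.comul y))
      = Coalgebra.counit (x * y * z)
  weak_unit₁ : iota12 k A (Coalgebra.comul 1) * iota23 k A (Coalgebra.comul 1)
      = (LinearMap.lTensor A (Coalgebra.comul (R := k) (A := A))) (Coalgebra.comul 1)
  weak_unit₂ : iota23 k A (Coalgebra.comul 1) * iota12 k A (Coalgebra.comul 1)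
      = (LinearMap.lTensor A (Coalgebra.comul (R := k) (A := A))) (Coalgebra.comul 1)

/-- The map `ε^l : x ↦ Σ ε(1₍₁₎ x) 1₍₂₎`. -/
def epsL : A →ₗ[k] A :=
  (TensorProduct.lid k A).toLinearMap
    ∘ₗ TensorProduct.map (Coalgebra.counit : A →ₗ[k] k) LinearMap.id
    ∘ₗ LinearMap.mulLeft k (Coalgebra.comul (R := k) (1 : A))
    ∘ₗ (TensorProduct.mk k A A).flip 1

/-- The map `ε^r : x ↦ Σ 1₍₁₎ ε(1₍₂₎ x)`. -/
def epsR : A →ₗ[k] A :=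
  (TensorProduct.rid k A).toLinearMap
    ∘ₗ TensorProduct.map LinearMap.id (Coalgebra.counit : A →ₗ[k] k)
    ∘ₗ LinearMap.mulLeft k (Coalgebra.comul (R := k) (1 : A))
    ∘ₗ TensorProduct.mk k A A 1

def Lmap (x : A) : A ⊗[k] A →ₗ[k] A :=
  (TensorProduct.lid k A).toLinearMap ∘ₗ
    TensorProduct.map ((Coalgebra.counit : A →ₗ[k] k) ∘ₗ LinearMap.mulRight k x) LinearMap.id

def Rmap (y : A) : A ⊗[k] A →ₗ[k] A :=
  (TensorProduct.rid k A).toLinearMap ∘ₗ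
    TensorProduct.map LinearMap.id ((Coalgebra.counit : A →ₗ[k] k) ∘ₗ LinearMap.mulRight k y)

def Phi (x y : A) : A ⊗[k] (A ⊗[k] A) →ₗ[k] A :=
  (TensorProduct.lid k A).toLinearMap ∘ₗ
    TensorProduct.map ((Coalgebra.counit : A →ₗ[k] k) ∘ₗ LinearMap.mulRight k x) (Rmap k A y)

variable {k A}

lemma Lmap_tmul (x a b : A) : Lmap k A x (a ⊗ₜ b) = Coalgebra.counit (R := k) (a * x) • b := by
  simp [Lmap]

lemma Rmap_tmul (y c d : A) : Rmap k A y (c ⊗ₜ d) = Coalgebra.counit (R := k) (d * y) • c := by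
  simp [Rmap]

lemma Phi_iota12_mul_iota23 (x y : A) (s u : A ⊗[k] A) :
    Phi k A x y (iota12 k A s * iota23 k A u) = Lmap k A x s * Rmap k A y u := by
  induction s using TensorProduct.induction_on with
  | zero => simp
  | add s₁ s₂ h₁ h₂ => simp [map_add, add_mul, h₁, h₂]
  | tmul a b =>
    induction u using TensorProduct.induction_on with
    | zero => simp
    | add u₁ u₂ h₁ h₂ => simp [map_add, mul_add, h₁, h₂]
    | tmul c d =>
      simp [iota12, iota23, Phi, Lmap_tmul, Rmap_tmul, Rmap,
        Algebra.TensorProduct.tmul_mul_tmul, smul_mul_assoc, mul_smul_comm, mul_comm]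

lemma Phi_iota23_mul_iota12 (x y : A) (s u : A ⊗[k] A) :
    Phi k A x y (iota23 k A u * iota12 k A s) = Rmap k A y u * Lmap k A x s := by
  induction s using TensorProduct.induction_on with
  | zero => simp
  | add s₁ s₂ h₁ h₂ => simp [map_add, mul_add, h₁, h₂]
  | tmul a b =>
    induction u using TensorProduct.induction_on with
    | zero => simp
    | add u₁ u₂ h₁ h₂ => simp [map_add, add_mul, h₁, h₂]
    | tmul c d =>
      simp [iota12, iota23, Phi, Lmap_tmul, Rmap_tmul, Rmap,
        Algebra.TensorProduct.tmul_mul_tmul, smul_mul_assoc, mul_smul_comm, mul_comm]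
      rw [smul_comm]


lemma epsL_eq (x : A) : epsL k A x = Lmap k A x (Coalgebra.comul (R := k) (1 : A)) := by
  have key : ∀ s : A ⊗[k] A,
      (TensorProduct.lid k A) (TensorProduct.map (Coalgebra.counit : A →ₗ[k] k)
        LinearMap.id (s * (x ⊗ₜ[k] (1 : A)))) = Lmap k A x s := by
    intro s
    induction s using TensorProduct.induction_on with
    | zero => simp
    | add s₁ s₂ h₁ h₂ => simp [add_mul, h₁, h₂]
    | tmul a b => simp [Algebra.TensorProduct.tmul_mul_tmul, Lmap_tmul]
  simpa [epsL] using key (Coalgebra.comul (R := k) (1 : A))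

lemma epsR_eq (y : A) : epsR k A y = Rmap k A y (Coalgebra.comul (R := k) (1 : A)) := by
  have key : ∀ s : A ⊗[k] A,
      (TensorProduct.rid k A) (TensorProduct.map LinearMap.id
        (Coalgebra.counit : A →ₗ[k] k) (s * ((1 : A) ⊗ₜ[k] y))) = Rmap k A y s := by
    intro s
    induction s using TensorProduct.induction_on with
    | zero => simp
    | add s₁ s₂ h₁ h₂ => simp [add_mul, h₁, h₂]
    | tmul a b => simp [Algebra.TensorProduct.tmul_mul_tmul, Rmap_tmul]
  simpa [epsR] using key (Coalgebra.comul (R := k) (1 : A))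

end

/-- In a weak bialgebra `A`, the base algebras `A^l = ε^l(A)` and
`A^r = ε^r(A)` mutually commute. -/
theorem base_algebras_commute (k A : Type*) [Field k] [Ring A] [Algebra k A] [Coalgebra k A]
    (h : IsWeakBialgebra k A) :
    ∀ x ∈ Set.range (epsL k A), ∀ y ∈ Set.range (epsR k A), x * y = y * x := by
  rintro _ ⟨x, rfl⟩ _ ⟨y, rfl⟩
  rw [epsL_eq, epsR_eq,
    ← Phi_iota12_mul_iota23 x y, ← Phi_iota23_mul_iota12 x y,
    h.weak_unit₁, h.weak_unit₂]
end

section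
/- Let A be a weak bialgebra over k. Then A^l = ε^l(A) is a unital subalgebra of A, i.e. it contains 1, and is closed under multiplication. -/
open TensorProduct

noncomputable section Aux

open TensorProduct

variable {k A : Type*} [Field k] [Ring A] [Algebra k A] [Coalgebra k A]

/-- auxiliary map `a ⊗ t ↦ ε(a x) • t` -/
def phiAux (x : A) : A ⊗[k] (A ⊗[k] A) →ₗ[k] A ⊗[k] A :=
  (TensorProduct.lid k (A ⊗[k] A)).toLinearMap
    ∘ₗ TensorProduct.map ((Coalgebra.counit : A →ₗ[k] k) ∘ₗ LinearMap.mulRight k x) LinearMap.id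

lemma epsL_apply (x : A) :
    epsL k A x = TensorProduct.lid k A
      (TensorProduct.map (Coalgebra.counit : A →ₗ[k] k) LinearMap.id
        (Coalgebra.comul (R := k) (1 : A) * (x ⊗ₜ[k] (1 : A)))) := rfl

lemma comul_epsL_eq (x : A) (t : A ⊗[k] A) :
    Coalgebra.comul (R := k) (TensorProduct.lid k A
      (TensorProduct.map (Coalgebra.counit : A →ₗ[k] k) LinearMap.id (t * (x ⊗ₜ[k] (1 : A)))))
    = phiAux x ((LinearMap.lTensor A (Coalgebra.comul (R := k) (A := A))) t) := by
  induction t using TensorProduct.induction_on with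
  | zero => simp
  | tmul a b => simp [phiAux, Algebra.TensorProduct.tmul_mul_tmul]
  | add s t hs ht => simp only [add_mul, map_add, hs, ht]

lemma phi_mul12 (x : A) (s t : A ⊗[k] A) :
    phiAux x (iota12 k A s * iota23 k A t)
      = ((TensorProduct.lid k A (TensorProduct.map (Coalgebra.counit : A →ₗ[k] k)
          LinearMap.id (s * (x ⊗ₜ[k] (1 : A))))) ⊗ₜ[k] (1 : A)) * t := by
  induction s using TensorProduct.induction_on with
  | zero => simp
  | tmul a b =>
    induction t using TensorProduct.induction_on with
    | zero => simp
    | tmul a' b' =>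
      simp [phiAux, iota12, iota23, Algebra.TensorProduct.tmul_mul_tmul,
        TensorProduct.smul_tmul', smul_mul_assoc]
    | add u v hu hv => simp only [map_add, mul_add, hu, hv]
  | add u v hu hv =>
    simp only [map_add, add_mul, hu, hv, TensorProduct.add_tmul]

lemma phi_mul23 (x : A) (s t : A ⊗[k] A) :
    phiAux x (iota23 k A t * iota12 k A s)
      = t * (((TensorProduct.lid k A (TensorProduct.map (Coalgebra.counit : A →ₗ[k] k)
          LinearMap.id (s * (x ⊗ₜ[k] (1 : A)))))) ⊗ₜ[k] (1 : A)) := by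
  induction s using TensorProduct.induction_on with
  | zero => simp
  | tmul a b =>
    induction t using TensorProduct.induction_on with
    | zero => simp
    | tmul a' b' =>
      simp [phiAux, iota12, iota23, Algebra.TensorProduct.tmul_mul_tmul,
        TensorProduct.smul_tmul', mul_smul_comm]
    | add u v hu hv => simp only [map_add, add_mul, hu, hv]
  | add u v hu hv =>
    simp only [add_mul, map_add, mul_add, hu, hv, TensorProduct.add_tmul]

lemma comul_epsL₁ (h : IsWeakBialgebra k A) (x : A) :
    Coalgebra.comul (R := k) (epsL k A x)
      = (epsL k A x ⊗ₜ[k] (1 : A)) * Coalgebra.comul (R := k) (1 : A) := by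
  have h1 := comul_epsL_eq x (Coalgebra.comul (R := k) (1 : A))
  rw [← h.weak_unit₁, phi_mul12] at h1
  rw [epsL_apply] at *
  exact h1

lemma comul_epsL₂ (h : IsWeakBialgebra k A) (x : A) :
    Coalgebra.comul (R := k) (epsL k A x)
      = Coalgebra.comul (R := k) (1 : A) * (epsL k A x ⊗ₜ[k] (1 : A)) := by
  have h1 := comul_epsL_eq x (Coalgebra.comul (R := k) (1 : A))
  rw [← h.weak_unit₂, phi_mul23] at h1
  rw [epsL_apply] at *
  exact h1

lemma epsL_fixed (a : A)
    (ha : Coalgebra.comul (R := k) a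
      = Coalgebra.comul (R := k) (1 : A) * (a ⊗ₜ[k] (1 : A))) :
    epsL k A a = a := by
  rw [epsL_apply, ← ha]
  have h2 := Coalgebra.rTensor_counit_comul (R := k) a
  rw [show (TensorProduct.map (Coalgebra.counit : A →ₗ[k] k) (LinearMap.id : A →ₗ[k] A))
      = LinearMap.rTensor A (Coalgebra.counit : A →ₗ[k] k) from rfl, h2]
  simp

end Aux

/-- In a weak bialgebra `A`, the image `A^l = ε^l(A)` is a unital
subalgebra of `A`: it contains `1` and is closed under multiplication. -/
theorem epsL_range_unital_subalgebra (k A : Type*) [Field k] [Ring A] [Algebra k A]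
    [Coalgebra k A] (h : IsWeakBialgebra k A) :
    (1 : A) ∈ Set.range (epsL k A) ∧
    ∀ x ∈ Set.range (epsL k A), ∀ y ∈ Set.range (epsL k A), x * y ∈ Set.range (epsL k A) := by
  have hcc : Coalgebra.comul (R := k) (1 : A) * Coalgebra.comul (R := k) (1 : A)
      = Coalgebra.comul (R := k) (1 : A) := by
    rw [← h.comul_mul, one_mul]
  constructor
  · refine ⟨1, epsL_fixed 1 ?_⟩
    rw [← Algebra.TensorProduct.one_def, mul_one]
  · rintro x ⟨u, rfl⟩ y ⟨v, rfl⟩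
    set x := epsL k A u with hxdef
    set y := epsL k A v with hydef
    have hx1 := comul_epsL₁ h u
    have hx2 := comul_epsL₂ h u
    have hy2 := comul_epsL₂ h v
    refine ⟨x * y, epsL_fixed (x * y) ?_⟩
    calc Coalgebra.comul (R := k) (x * y)
        = Coalgebra.comul (R := k) x * Coalgebra.comul (R := k) y := h.comul_mul x y
      _ = (Coalgebra.comul (R := k) (1 : A) * (x ⊗ₜ[k] (1 : A)))
            * (Coalgebra.comul (R := k) (1 : A) * (y ⊗ₜ[k] (1 : A))) := by rw [← hx2, ← hy2]
      _ = Coalgebra.comul (R := k) (1 : A) * (((x ⊗ₜ[k] (1 : A))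
            * Coalgebra.comul (R := k) (1 : A)) * (y ⊗ₜ[k] (1 : A))) := by
            rw [mul_assoc, mul_assoc]
      _ = Coalgebra.comul (R := k) (1 : A) * ((Coalgebra.comul (R := k) (1 : A)
            * (x ⊗ₜ[k] (1 : A))) * (y ⊗ₜ[k] (1 : A))) := by rw [← hx1, hx2]
      _ = Coalgebra.comul (R := k) (1 : A) * ((x * y) ⊗ₜ[k] ((1 : A) * 1)) := by
            rw [← mul_assoc, ← mul_assoc, hcc, mul_assoc, Algebra.TensorProduct.tmul_mul_tmul]
      _ = Coalgebra.comul (R := k) (1 : A) * ((x * y) ⊗ₜ[k] (1 : A)) := by rw [one_mul]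
end

section
/- Let A be a weak bialgebra over k. Then the restrictions ε^l|_{A^r} : A^r → A^l and ε^r|_{A^l} : A^l → A^r are mutually inverse algebra anti-isomorphisms. -/
open TensorProduct

noncomputable section WBA
set_option linter.unusedSectionVars false

open Coalgebra LinearMap Finset

variable {k A : Type*} [Field k] [Ring A] [Algebra k A] [Coalgebra k A]

local notation "ε" => (Coalgebra.counit : A →ₗ[k] k)
local notation "Δ" => (Coalgebra.comul : A →ₗ[k] A ⊗[k] A)

theorem wc1_rep (h : IsWeakBialgebra k A) {y : A} {ι : Type*} {T : Finset ι} {F G : ι → A}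
    (hy : Δ y = ∑ i ∈ T, F i ⊗ₜ[k] G i) (x z : A) :
    ∑ i ∈ T, ε (x * F i) * ε (G i * z) = ε (x * y * z) := by
  have H := h.weak_counit₁ x y z
  rw [hy, map_sum, map_sum] at H
  simpa using H

theorem wc2_rep (h : IsWeakBialgebra k A) {y : A} {ι : Type*} {T : Finset ι} {F G : ι → A}
    (hy : Δ y = ∑ i ∈ T, F i ⊗ₜ[k] G i) (x z : A) :
    ∑ i ∈ T, ε (F i * z) * ε (x * G i) = ε (x * y * z) := by
  have H := h.weak_counit₂ x y z
  rw [hy, map_sum, map_sum] at H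
  simpa using H

variable (h : IsWeakBialgebra k A) (S : Finset (A × A))
  (hS : (Coalgebra.comul (R := k) (1 : A)) = ∑ p ∈ S, p.1 ⊗ₜ[k] p.2)
include h hS

theorem epsL_apply_s7 (x : A) : epsL k A x = ∑ p ∈ S, ε (p.1 * x) • p.2 := by
  simp only [epsL, LinearMap.comp_apply, TensorProduct.mk_apply, LinearMap.flip_apply,
    LinearMap.mulLeft_apply, hS, Finset.sum_mul, Algebra.TensorProduct.tmul_mul_tmul,
    one_mul, mul_one, map_sum, TensorProduct.map_tmul, LinearMap.id_coe, id_eq]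
  simp [TensorProduct.lid_tmul]

theorem epsR_apply (x : A) : epsR k A x = ∑ p ∈ S, ε (p.2 * x) • p.1 := by
  simp only [epsR, LinearMap.comp_apply, TensorProduct.mk_apply,
    LinearMap.mulLeft_apply, hS, Finset.sum_mul, Algebra.TensorProduct.tmul_mul_tmul,
    one_mul, mul_one, map_sum, TensorProduct.map_tmul, LinearMap.id_coe, id_eq]
  simp [TensorProduct.rid_tmul]

theorem counit_one_l : ∑ p ∈ S, ε p.1 • p.2 = 1 := by
  have H := Coalgebra.rTensor_counit_comul (R := k) (1 : A)
  rw [hS, map_sum] at H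
  simpa using congrArg (TensorProduct.lid k A) H

theorem counit_one_r : ∑ p ∈ S, ε p.2 • p.1 = 1 := by
  have H := Coalgebra.lTensor_counit_comul (R := k) (1 : A)
  rw [hS, map_sum] at H
  simpa using congrArg (TensorProduct.rid k A) H

theorem wc1_one (x z : A) : ∑ p ∈ S, ε (x * p.1) * ε (p.2 * z) = ε (x * z) := by
  simpa using wc1_rep h hS x z

theorem wc2_one (x z : A) : ∑ p ∈ S, ε (p.1 * z) * ε (x * p.2) = ε (x * z) := by
  simpa using wc2_rep h hS x z

theorem eps_mul_epsR (w x : A) : ε (w * epsR k A x) = ε (w * x) := by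
  rw [epsR_apply h S hS, Finset.mul_sum, map_sum, ← wc1_one h S hS w x]
  exact Finset.sum_congr rfl fun p _ => by
    rw [mul_smul_comm, map_smul, smul_eq_mul, mul_comm]

theorem eps_mul_epsL (w x : A) : ε (w * epsL k A x) = ε (w * x) := by
  rw [epsL_apply_s7 h S hS, Finset.mul_sum, map_sum, ← wc2_one h S hS w x]
  exact Finset.sum_congr rfl fun p _ => by
    rw [mul_smul_comm, map_smul, smul_eq_mul, mul_comm]

theorem epsL_mul_epsR (x y : A) : epsL k A (x * epsR k A y) = epsL k A (x * y) := by
  rw [epsL_apply_s7 h S hS (x * epsR k A y), epsL_apply_s7 h S hS (x * y)]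
  exact Finset.sum_congr rfl fun p _ => by
    rw [← mul_assoc, eps_mul_epsR h S hS, mul_assoc]

theorem epsL_mul_epsL (x y : A) : epsL k A (x * epsL k A y) = epsL k A (x * y) := by
  rw [epsL_apply_s7 h S hS (x * epsL k A y), epsL_apply_s7 h S hS (x * y)]
  exact Finset.sum_congr rfl fun p _ => by
    rw [← mul_assoc, eps_mul_epsL h S hS, mul_assoc]

theorem epsR_mul_epsR (x y : A) : epsR k A (x * epsR k A y) = epsR k A (x * y) := by
  rw [epsR_apply h S hS (x * epsR k A y), epsR_apply h S hS (x * y)]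
  exact Finset.sum_congr rfl fun p _ => by
    rw [← mul_assoc, eps_mul_epsR h S hS, mul_assoc]

theorem epsR_mul_epsL (x y : A) : epsR k A (x * epsL k A y) = epsR k A (x * y) := by
  rw [epsR_apply h S hS (x * epsL k A y), epsR_apply h S hS (x * y)]
  exact Finset.sum_congr rfl fun p _ => by
    rw [← mul_assoc, eps_mul_epsL h S hS, mul_assoc]

theorem epsL_one : epsL k A 1 = 1 := by
  rw [epsL_apply_s7 h S hS]; simpa using counit_one_l h S hS

theorem epsR_one : epsR k A 1 = 1 := by
  rw [epsR_apply h S hS]; simpa using counit_one_r h S hS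

theorem epsL_epsR (x : A) : epsL k A (epsR k A x) = epsL k A x := by
  simpa using epsL_mul_epsR h S hS 1 x

theorem epsR_epsL (x : A) : epsR k A (epsL k A x) = epsR k A x := by
  simpa using epsR_mul_epsL h S hS 1 x

theorem hU1 : ∑ p ∈ S, p.1 ⊗ₜ[k] (Δ p.2)
    = ∑ p ∈ S, ∑ q ∈ S, p.1 ⊗ₜ[k] ((p.2 * q.1) ⊗ₜ[k] q.2) := by
  have H := h.weak_unit₁
  rw [hS] at H
  simp only [iota12, iota23, map_sum, TensorProduct.map_tmul, TensorProduct.mk_apply,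
    LinearMap.flip_apply, LinearMap.lTensor_tmul, LinearMap.id_coe, id_eq,
    Finset.sum_mul_sum, Algebra.TensorProduct.tmul_mul_tmul, mul_one, one_mul] at H
  exact H.symm

theorem hU2 : ∑ p ∈ S, p.1 ⊗ₜ[k] (Δ p.2)
    = ∑ p ∈ S, ∑ q ∈ S, p.1 ⊗ₜ[k] ((q.1 * p.2) ⊗ₜ[k] q.2) := by
  have H := h.weak_unit₂
  rw [hS] at H
  simp only [iota12, iota23, map_sum, TensorProduct.map_tmul, TensorProduct.mk_apply,
    LinearMap.flip_apply, LinearMap.lTensor_tmul, LinearMap.id_coe, id_eq,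
    Finset.sum_mul_sum, Algebra.TensorProduct.tmul_mul_tmul, mul_one, one_mul] at H
  rw [← H, Finset.sum_comm]

theorem rTensor_comul_one : LinearMap.rTensor A Δ (Δ (1:A)) = ∑ p ∈ S, (Δ p.1) ⊗ₜ[k] p.2 := by
  rw [hS, map_sum]
  exact Finset.sum_congr rfl fun p _ => by rw [LinearMap.rTensor_tmul]

theorem lTensor_comul_one : LinearMap.lTensor A Δ (Δ (1:A)) = ∑ p ∈ S, p.1 ⊗ₜ[k] (Δ p.2) := by
  rw [hS, map_sum]
  exact Finset.sum_congr rfl fun p _ => by rw [LinearMap.lTensor_tmul]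

set_option synthInstance.maxHeartbeats 1000000 in
theorem hU3 : ∑ p ∈ S, (Δ p.1) ⊗ₜ[k] p.2
    = ∑ p ∈ S, ∑ q ∈ S, (p.1 ⊗ₜ[k] (p.2 * q.1)) ⊗ₜ[k] q.2 := by
  rw [← rTensor_comul_one h S hS, ← Coalgebra.coassoc_symm_apply (R := k) (1:A),
    lTensor_comul_one h S hS, hU1 h S hS, map_sum]
  exact Finset.sum_congr rfl fun p _ => by
    rw [map_sum]
    exact Finset.sum_congr rfl fun q _ => by rw [TensorProduct.assoc_symm_tmul]

set_option synthInstance.maxHeartbeats 1000000 in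
theorem hU4 : ∑ p ∈ S, (Δ p.1) ⊗ₜ[k] p.2
    = ∑ p ∈ S, ∑ q ∈ S, (p.1 ⊗ₜ[k] (q.1 * p.2)) ⊗ₜ[k] q.2 := by
  rw [← rTensor_comul_one h S hS, ← Coalgebra.coassoc_symm_apply (R := k) (1:A),
    lTensor_comul_one h S hS, hU2 h S hS, map_sum]
  exact Finset.sum_congr rfl fun p _ => by
    rw [map_sum]
    exact Finset.sum_congr rfl fun q _ => by rw [TensorProduct.assoc_symm_tmul]

theorem comul_epsL₁_s7 (x : A) :
    Δ (epsL k A x) = ∑ q ∈ S, (epsL k A x * q.1) ⊗ₜ[k] q.2 := by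
  have H := congrArg ((TensorProduct.lid k (A ⊗[k] A)).toLinearMap
    ∘ₗ ((ε ∘ₗ LinearMap.mulRight k x).rTensor (A ⊗[k] A))) (hU1 h S hS)
  simp only [map_sum, LinearMap.comp_apply, LinearMap.rTensor_tmul,
    LinearEquiv.coe_coe, TensorProduct.lid_tmul, LinearMap.mulRight_apply] at H
  rw [epsL_apply_s7 h S hS, map_sum]
  simp only [map_smul]
  rw [H]
  rw [Finset.sum_comm]
  refine Finset.sum_congr rfl fun q _ => ?_
  rw [Finset.sum_mul, TensorProduct.sum_tmul]
  exact Finset.sum_congr rfl fun p _ => by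
    rw [smul_mul_assoc, TensorProduct.smul_tmul']

theorem comul_epsL₂_s7 (x : A) :
    Δ (epsL k A x) = ∑ q ∈ S, (q.1 * epsL k A x) ⊗ₜ[k] q.2 := by
  have H := congrArg ((TensorProduct.lid k (A ⊗[k] A)).toLinearMap
    ∘ₗ ((ε ∘ₗ LinearMap.mulRight k x).rTensor (A ⊗[k] A))) (hU2 h S hS)
  simp only [map_sum, LinearMap.comp_apply, LinearMap.rTensor_tmul,
    LinearEquiv.coe_coe, TensorProduct.lid_tmul, LinearMap.mulRight_apply] at H
  rw [epsL_apply_s7 h S hS, map_sum]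
  simp only [map_smul]
  rw [H]
  rw [Finset.sum_comm]
  refine Finset.sum_congr rfl fun q _ => ?_
  rw [Finset.mul_sum, TensorProduct.sum_tmul]
  exact Finset.sum_congr rfl fun p _ => by
    rw [mul_smul_comm, TensorProduct.smul_tmul']

theorem comul_epsR₁ (x : A) :
    Δ (epsR k A x) = ∑ q ∈ S, q.1 ⊗ₜ[k] (q.2 * epsR k A x) := by
  have H := congrArg ((TensorProduct.rid k (A ⊗[k] A)).toLinearMap
    ∘ₗ ((ε ∘ₗ LinearMap.mulRight k x).lTensor (A ⊗[k] A))) (hU3 h S hS)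
  simp only [map_sum, LinearMap.comp_apply, LinearMap.lTensor_tmul,
    LinearEquiv.coe_coe, TensorProduct.rid_tmul, LinearMap.mulRight_apply] at H
  rw [epsR_apply h S hS, map_sum]
  simp only [map_smul]
  rw [H]
  refine Finset.sum_congr rfl fun q _ => ?_
  rw [Finset.mul_sum, TensorProduct.tmul_sum]
  exact Finset.sum_congr rfl fun p _ => by
    rw [mul_smul_comm, TensorProduct.tmul_smul]

theorem comul_epsR₂ (x : A) :
    Δ (epsR k A x) = ∑ q ∈ S, q.1 ⊗ₜ[k] (epsR k A x * q.2) := by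
  have H := congrArg ((TensorProduct.rid k (A ⊗[k] A)).toLinearMap
    ∘ₗ ((ε ∘ₗ LinearMap.mulRight k x).lTensor (A ⊗[k] A))) (hU4 h S hS)
  simp only [map_sum, LinearMap.comp_apply, LinearMap.lTensor_tmul,
    LinearEquiv.coe_coe, TensorProduct.rid_tmul, LinearMap.mulRight_apply] at H
  rw [epsR_apply h S hS, map_sum]
  simp only [map_smul]
  rw [H]
  refine Finset.sum_congr rfl fun q _ => ?_
  rw [Finset.sum_mul, TensorProduct.tmul_sum]
  exact Finset.sum_congr rfl fun p _ => by
    rw [smul_mul_assoc, TensorProduct.tmul_smul]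

theorem comul_epsL₁' (x : A) :
    Δ (epsL k A x) = (epsL k A x ⊗ₜ[k] 1) * Δ (1:A) := by
  rw [comul_epsL₁_s7 h S hS, hS, Finset.mul_sum]
  exact Finset.sum_congr rfl fun q _ => by
    rw [Algebra.TensorProduct.tmul_mul_tmul, one_mul]

theorem comul_epsL₂' (x : A) :
    Δ (epsL k A x) = Δ (1:A) * (epsL k A x ⊗ₜ[k] 1) := by
  rw [comul_epsL₂_s7 h S hS, hS, Finset.sum_mul]
  exact Finset.sum_congr rfl fun q _ => by
    rw [Algebra.TensorProduct.tmul_mul_tmul, mul_one]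

theorem comul_epsR₁' (x : A) :
    Δ (epsR k A x) = Δ (1:A) * (1 ⊗ₜ[k] epsR k A x) := by
  rw [comul_epsR₁ h S hS, hS, Finset.sum_mul]
  exact Finset.sum_congr rfl fun q _ => by
    rw [Algebra.TensorProduct.tmul_mul_tmul, mul_one]

theorem comul_epsR₂' (x : A) :
    Δ (epsR k A x) = (1 ⊗ₜ[k] epsR k A x) * Δ (1:A) := by
  rw [comul_epsR₂ h S hS, hS, Finset.mul_sum]
  exact Finset.sum_congr rfl fun q _ => by
    rw [Algebra.TensorProduct.tmul_mul_tmul, one_mul]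

theorem comul_one_sq : Δ (1:A) * Δ (1:A) = Δ (1:A) := by
  simpa using (h.comul_mul 1 1).symm

theorem comul_epsLL (z z' : A) :
    Δ (epsL k A z * epsL k A z') = ((epsL k A z * epsL k A z') ⊗ₜ[k] 1) * Δ (1:A) := by
  rw [h.comul_mul, comul_epsL₁' h S hS z, comul_epsL₂' h S hS z',
    mul_assoc, ← mul_assoc (Δ (1:A)), comul_one_sq h S hS,
    ← comul_epsL₂' h S hS z', comul_epsL₁' h S hS z', ← mul_assoc,
    Algebra.TensorProduct.tmul_mul_tmul, one_mul]

theorem comul_epsRR (z z' : A) :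
    Δ (epsR k A z * epsR k A z') = (1 ⊗ₜ[k] (epsR k A z * epsR k A z')) * Δ (1:A) := by
  rw [h.comul_mul, comul_epsR₂' h S hS z, comul_epsR₁' h S hS z',
    mul_assoc, ← mul_assoc (Δ (1:A)), comul_one_sq h S hS,
    ← comul_epsR₁' h S hS z', comul_epsR₂' h S hS z', ← mul_assoc,
    Algebra.TensorProduct.tmul_mul_tmul, one_mul]

theorem hrho (z z' : A) :
    ∑ q ∈ S, ε ((epsL k A z * epsL k A z') * q.1) • q.2 = epsL k A z * epsL k A z' := by
  set c := epsL k A z * epsL k A z' with hc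
  have hΔ : Δ c = ∑ q ∈ S, (c * q.1) ⊗ₜ[k] q.2 := by
    rw [comul_epsLL h S hS, hS, Finset.mul_sum]
    exact Finset.sum_congr rfl fun q _ => by
      rw [Algebra.TensorProduct.tmul_mul_tmul, one_mul]
  have H := congrArg (TensorProduct.lid k A) (Coalgebra.rTensor_counit_comul (R := k) c)
  rw [hΔ, map_sum, map_sum] at H
  simpa using H

theorem hsig (z z' : A) :
    ∑ q ∈ S, ε ((epsR k A z * epsR k A z') * q.2) • q.1 = epsR k A z * epsR k A z' := by
  set c := epsR k A z * epsR k A z' with hc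
  have hΔ : Δ c = ∑ q ∈ S, q.1 ⊗ₜ[k] (c * q.2) := by
    rw [comul_epsRR h S hS, hS, Finset.mul_sum]
    exact Finset.sum_congr rfl fun q _ => by
      rw [Algebra.TensorProduct.tmul_mul_tmul, one_mul]
  have H := congrArg (TensorProduct.rid k A) (Coalgebra.lTensor_counit_comul (R := k) c)
  rw [hΔ, map_sum, map_sum] at H
  simpa using H

theorem hR' : ∑ p ∈ S, p.1 ⊗ₜ[k] epsL k A p.2 = ∑ p ∈ S, p.1 ⊗ₜ[k] p.2 := by
  have H := congrArg (LinearMap.lTensor A ((TensorProduct.lid k A).toLinearMap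
    ∘ₗ (Coalgebra.counit (R := k)).rTensor A)) (hU2 h S hS)
  simp only [map_sum, LinearMap.lTensor_tmul, LinearMap.comp_apply, LinearMap.rTensor_tmul,
    LinearEquiv.coe_coe, Coalgebra.rTensor_counit_comul, TensorProduct.lid_tmul,
    one_smul] at H
  rw [H]
  exact Finset.sum_congr rfl fun p _ => by
    rw [epsL_apply_s7 h S hS, TensorProduct.tmul_sum]

theorem hR : ∑ p ∈ S, epsR k A p.1 ⊗ₜ[k] p.2 = ∑ p ∈ S, p.1 ⊗ₜ[k] p.2 := by
  have H := congrArg (LinearMap.rTensor A ((TensorProduct.rid k A).toLinearMap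
    ∘ₗ (Coalgebra.counit (R := k)).lTensor A)) (hU3 h S hS)
  simp only [map_sum, LinearMap.rTensor_tmul, LinearMap.comp_apply, LinearMap.lTensor_tmul,
    LinearEquiv.coe_coe, Coalgebra.lTensor_counit_comul, TensorProduct.rid_tmul,
    one_smul] at H
  rw [H, Finset.sum_comm]
  exact Finset.sum_congr rfl fun q _ => by
    rw [epsR_apply h S hS, TensorProduct.sum_tmul]

theorem hZ (z x : A) :
    ∑ q ∈ S, ε (epsL k A z * q.1 * x) • q.2 = epsL k A z * epsL k A x := by
  have H := congrArg ((TensorProduct.lid k A).toLinearMap ∘ₗ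
    LinearMap.rTensor A (LinearMap.mul' k k ∘ₗ TensorProduct.map
      (ε ∘ₗ LinearMap.mulRight k x) (ε ∘ₗ LinearMap.mulLeft k (epsL k A z))))
      (hU3 h S hS)
  simp only [map_sum, LinearMap.comp_apply, LinearMap.rTensor_tmul, LinearEquiv.coe_coe,
    TensorProduct.lid_tmul, TensorProduct.map_tmul, LinearMap.mul'_apply,
    LinearMap.mulRight_apply, LinearMap.mulLeft_apply] at H
  have hsc : ∀ q1 : A, ∑ p ∈ S, ε (p.1 * x) * ε (epsL k A z * (p.2 * q1))
      = ε ((epsL k A z * epsL k A x) * q1) := by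
    intro q1
    rw [mul_assoc, epsL_apply_s7 h S hS x, Finset.sum_mul, Finset.mul_sum, map_sum]
    exact Finset.sum_congr rfl fun p _ => by
      rw [smul_mul_assoc, mul_smul_comm, map_smul, smul_eq_mul]
  calc ∑ q ∈ S, ε (epsL k A z * q.1 * x) • q.2
      = ∑ q ∈ S, (LinearMap.mul' k k ((TensorProduct.map (ε ∘ₗ LinearMap.mulRight k x)
          (ε ∘ₗ LinearMap.mulLeft k (epsL k A z))) (Δ q.1))) • q.2 :=
        Finset.sum_congr rfl fun q _ => by
          rw [h.weak_counit₂ (epsL k A z) q.1 x]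
    _ = ∑ p ∈ S, ∑ q ∈ S, (ε (p.1 * x) * ε (epsL k A z * (p.2 * q.1))) • q.2 := H
    _ = ∑ q ∈ S, ε ((epsL k A z * epsL k A x) * q.1) • q.2 := by
        rw [Finset.sum_comm]
        exact Finset.sum_congr rfl fun q _ => by rw [← Finset.sum_smul, hsc q.1]
    _ = epsL k A z * epsL k A x := hrho h S hS z x

theorem eps_epsL_mul (z c : A) :
    ε (epsL k A z * c) = ∑ p ∈ S, ε (p.1 * z) * ε (p.2 * c) := by
  rw [epsL_apply_s7 h S hS z, Finset.sum_mul, map_sum]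
  exact Finset.sum_congr rfl fun p _ => by rw [smul_mul_assoc, map_smul, smul_eq_mul]

theorem epsL_comul_rep (b x : A) {ι : Type*} {T : Finset ι} {F G : ι → A}
    (hb : Δ b = ∑ i ∈ T, F i ⊗ₜ[k] G i) :
    epsL k A (b * x) = ∑ i ∈ T, ε (F i * x) • epsL k A (G i) := by
  rw [epsL_apply_s7 h S hS]
  have hq : ∀ q1 : A, ε (q1 * (b * x)) = ∑ i ∈ T, ε (F i * x) * ε (q1 * G i) := fun q1 => by
    rw [← mul_assoc]; exact (wc2_rep h hb q1 x).symm
  calc ∑ q ∈ S, ε (q.1 * (b * x)) • q.2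
      = ∑ q ∈ S, ∑ i ∈ T, (ε (F i * x) * ε (q.1 * G i)) • q.2 := by
        refine Finset.sum_congr rfl fun q _ => ?_
        rw [hq q.1, Finset.sum_smul]
    _ = ∑ i ∈ T, ε (F i * x) • epsL k A (G i) := by
        rw [Finset.sum_comm]
        refine Finset.sum_congr rfl fun i _ => ?_
        rw [epsL_apply_s7 h S hS (G i), Finset.smul_sum]
        exact Finset.sum_congr rfl fun q _ => (smul_smul _ _ _).symm

theorem Gamma_comul (x b : A) :
    (TensorProduct.lid k A) (LinearMap.rTensor A (ε ∘ₗ LinearMap.mulRight k x)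
      (LinearMap.lTensor A (epsL k A) (Δ b))) = epsL k A (b * x) := by
  obtain ⟨T, hT⟩ := TensorProduct.exists_finset (Δ b)
  rw [hT, epsL_comul_rep h S hS b x hT, map_sum, map_sum, map_sum]
  exact Finset.sum_congr rfl fun t _ => by
    rw [LinearMap.lTensor_tmul, LinearMap.rTensor_tmul, TensorProduct.lid_tmul,
      LinearMap.comp_apply, LinearMap.mulRight_apply]

theorem epsL_epsL_mul (z x : A) :
    epsL k A (epsL k A z * x) = epsL k A z * epsL k A x := by
  have step0 : epsL k A (epsL k A z * x) = ∑ p ∈ S, ε (p.1 * z) • epsL k A (p.2 * x) := by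
    rw [epsL_apply_s7 h S hS z, Finset.sum_mul, map_sum]
    exact Finset.sum_congr rfl fun p _ => by rw [smul_mul_assoc, map_smul]
  have HU := congrArg ((TensorProduct.lid k A).toLinearMap ∘ₗ
      LinearMap.rTensor A (ε ∘ₗ LinearMap.mulRight k z) ∘ₗ
      LinearMap.lTensor A ((TensorProduct.lid k A).toLinearMap ∘ₗ
        LinearMap.rTensor A (ε ∘ₗ LinearMap.mulRight k x) ∘ₗ
        LinearMap.lTensor A (epsL k A))) (hU1 h S hS)
  simp only [map_sum, LinearMap.comp_apply, LinearMap.lTensor_tmul, LinearMap.rTensor_tmul,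
    LinearEquiv.coe_coe, TensorProduct.lid_tmul, LinearMap.mulRight_apply] at HU
  have HR := congrArg ((TensorProduct.lid k A).toLinearMap ∘ₗ
    LinearMap.rTensor A (ε ∘ₗ LinearMap.mulLeft k (epsL k A z) ∘ₗ LinearMap.mulRight k x))
    (hR' h S hS)
  simp only [map_sum, LinearMap.comp_apply, LinearMap.rTensor_tmul, LinearEquiv.coe_coe,
    TensorProduct.lid_tmul, LinearMap.mulRight_apply, LinearMap.mulLeft_apply] at HR
  calc epsL k A (epsL k A z * x)
      = ∑ p ∈ S, ε (p.1 * z) • epsL k A (p.2 * x) := step0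
    _ = ∑ p ∈ S, ε (p.1 * z) • (TensorProduct.lid k A) (LinearMap.rTensor A
          (ε ∘ₗ LinearMap.mulRight k x) (LinearMap.lTensor A (epsL k A) (Δ p.2))) :=
        Finset.sum_congr rfl fun p _ => by rw [Gamma_comul h S hS]
    _ = ∑ p ∈ S, ∑ q ∈ S, ε (p.1 * z) • (ε (p.2 * q.1 * x) • epsL k A q.2) := HU
    _ = ∑ q ∈ S, ε (epsL k A z * (q.1 * x)) • epsL k A q.2 := by
        rw [Finset.sum_comm]
        refine Finset.sum_congr rfl fun q _ => ?_
        rw [eps_epsL_mul h S hS, Finset.sum_smul]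
        exact Finset.sum_congr rfl fun p _ => by
          rw [smul_smul, mul_assoc p.2 q.1 x]
    _ = ∑ q ∈ S, ε (epsL k A z * (q.1 * x)) • q.2 := HR
    _ = ∑ q ∈ S, ε (epsL k A z * q.1 * x) • q.2 :=
        Finset.sum_congr rfl fun q _ => by rw [mul_assoc]
    _ = epsL k A z * epsL k A x := hZ h S hS z x

theorem hQ (x : A) :
    ∑ p ∈ S, p.1 ⊗ₜ[k] epsL k A (p.2 * x) = ∑ p ∈ S, p.1 ⊗ₜ[k] (p.2 * epsL k A x) := by
  have H1 := congrArg (LinearMap.lTensor A (epsL k A ∘ₗ LinearMap.mulRight k x)) (hR' h S hS)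
  have H2 := congrArg (LinearMap.lTensor A (LinearMap.mulRight k (epsL k A x))) (hR' h S hS)
  simp only [map_sum, LinearMap.lTensor_tmul, LinearMap.comp_apply,
    LinearMap.mulRight_apply] at H1 H2
  rw [← H1, ← H2]
  exact Finset.sum_congr rfl fun p _ => by rw [epsL_epsL_mul h S hS]

theorem hK (x y : A) :
    epsL k A (epsR k A x * y) = epsL k A y * epsL k A x := by
  have hu : Δ (epsR k A x) = ∑ p ∈ S, p.1 ⊗ₜ[k] (p.2 * epsR k A x) := comul_epsR₁ h S hS x
  have HQ := congrArg ((TensorProduct.lid k A).toLinearMap ∘ₗ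
    LinearMap.rTensor A (ε ∘ₗ LinearMap.mulRight k y)) (hQ h S hS x)
  simp only [map_sum, LinearMap.comp_apply, LinearMap.rTensor_tmul, LinearEquiv.coe_coe,
    TensorProduct.lid_tmul, LinearMap.mulRight_apply] at HQ
  calc epsL k A (epsR k A x * y)
      = ∑ q ∈ S, ε (q.1 * (epsR k A x * y)) • q.2 := epsL_apply_s7 h S hS _
    _ = ∑ q ∈ S, ∑ p ∈ S, (ε (p.1 * y) * ε (q.1 * (p.2 * epsR k A x))) • q.2 := by
        refine Finset.sum_congr rfl fun q _ => ?_
        rw [← mul_assoc, ← wc2_rep h hu q.1 y, Finset.sum_smul]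
    _ = ∑ p ∈ S, ε (p.1 * y) • epsL k A (p.2 * epsR k A x) := by
        rw [Finset.sum_comm]
        refine Finset.sum_congr rfl fun p _ => ?_
        rw [epsL_apply_s7 h S hS (p.2 * epsR k A x), Finset.smul_sum]
        exact Finset.sum_congr rfl fun q _ => (smul_smul _ _ _).symm
    _ = ∑ p ∈ S, ε (p.1 * y) • epsL k A (p.2 * x) :=
        Finset.sum_congr rfl fun p _ => by rw [epsL_mul_epsR h S hS]
    _ = ∑ p ∈ S, ε (p.1 * y) • (p.2 * epsL k A x) := HQ
    _ = epsL k A y * epsL k A x := by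
        rw [epsL_apply_s7 h S hS y, Finset.sum_mul]
        exact Finset.sum_congr rfl fun p _ => by rw [smul_mul_assoc]

theorem hM16 (z x : A) :
    ∑ q ∈ S, ε (epsR k A z * q.2 * x) • q.1 = epsR k A z * epsR k A x := by
  have hσ : ∀ c : A, (∑ p ∈ S, ((ε ∘ₗ LinearMap.mulRight k p.2).smulRight p.1)) c
      = ∑ p ∈ S, ε (c * p.2) • p.1 := by
    intro c
    rw [LinearMap.sum_apply]
    exact Finset.sum_congr rfl fun p _ => by
      rw [LinearMap.smulRight_apply, LinearMap.comp_apply, LinearMap.mulRight_apply]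
  have H := congrArg ((TensorProduct.rid k A).toLinearMap ∘ₗ
    LinearMap.lTensor A (LinearMap.mul' k k ∘ₗ TensorProduct.map
      (ε ∘ₗ LinearMap.mulLeft k (epsR k A z)) (ε ∘ₗ LinearMap.mulRight k x)))
    (hU2 h S hS)
  simp only [map_sum, LinearMap.comp_apply, LinearMap.lTensor_tmul, LinearEquiv.coe_coe,
    TensorProduct.rid_tmul, TensorProduct.map_tmul, LinearMap.mul'_apply,
    LinearMap.mulRight_apply, LinearMap.mulLeft_apply] at H
  have H3 := congrArg ((TensorProduct.rid k A).toLinearMap ∘ₗ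
    LinearMap.lTensor A (ε ∘ₗ LinearMap.mulRight k x) ∘ₗ
    LinearMap.rTensor A ((∑ p ∈ S, ((ε ∘ₗ LinearMap.mulRight k p.2).smulRight p.1))
      ∘ₗ LinearMap.mulLeft k (epsR k A z))) (hR h S hS)
  simp only [map_sum, LinearMap.comp_apply, LinearMap.rTensor_tmul, LinearMap.lTensor_tmul,
    LinearEquiv.coe_coe, TensorProduct.rid_tmul, LinearMap.mulRight_apply,
    LinearMap.mulLeft_apply] at H3
  have H4 := congrArg ((TensorProduct.rid k A).toLinearMap ∘ₗ
    LinearMap.lTensor A (ε ∘ₗ LinearMap.mulRight k x) ∘ₗ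
    LinearMap.rTensor A (LinearMap.mulLeft k (epsR k A z))) (hR h S hS)
  simp only [map_sum, LinearMap.comp_apply, LinearMap.rTensor_tmul, LinearMap.lTensor_tmul,
    LinearEquiv.coe_coe, TensorProduct.rid_tmul, LinearMap.mulRight_apply,
    LinearMap.mulLeft_apply] at H4
  calc ∑ q ∈ S, ε (epsR k A z * q.2 * x) • q.1
      = ∑ q ∈ S, (LinearMap.mul' k k ((TensorProduct.map
          (ε ∘ₗ LinearMap.mulLeft k (epsR k A z)) (ε ∘ₗ LinearMap.mulRight k x))
          (Δ q.2))) • q.1 :=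
        Finset.sum_congr rfl fun q _ => by
          rw [h.weak_counit₁ (epsR k A z) q.2 x]
    _ = ∑ p ∈ S, ∑ q ∈ S, (ε (epsR k A z * (q.1 * p.2)) * ε (q.2 * x)) • p.1 := H
    _ = ∑ q ∈ S, ε (q.2 * x) • ((∑ p ∈ S, ((ε ∘ₗ LinearMap.mulRight k p.2).smulRight p.1))
          (epsR k A z * q.1)) := by
        rw [Finset.sum_comm]
        refine Finset.sum_congr rfl fun q _ => ?_
        rw [hσ, Finset.smul_sum]
        exact Finset.sum_congr rfl fun p _ => by
          rw [smul_smul, mul_comm (ε (epsR k A z * (q.1 * p.2))), ← mul_assoc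
            (epsR k A z)]
    _ = ∑ q ∈ S, ε (q.2 * x) • ((∑ p ∈ S, ((ε ∘ₗ LinearMap.mulRight k p.2).smulRight p.1))
          (epsR k A z * epsR k A q.1)) := H3.symm
    _ = ∑ q ∈ S, ε (q.2 * x) • (epsR k A z * epsR k A q.1) := by
        refine Finset.sum_congr rfl fun q _ => ?_
        rw [hσ, hsig h S hS z q.1]
    _ = ∑ q ∈ S, ε (q.2 * x) • (epsR k A z * q.1) := H4
    _ = epsR k A z * epsR k A x := by
        rw [epsR_apply h S hS x, Finset.mul_sum]
        exact Finset.sum_congr rfl fun q _ => by rw [mul_smul_comm]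

theorem hM17 (z x : A) :
    epsR k A (epsR k A z * x) = epsR k A z * epsR k A x := by
  have hu : Δ (epsR k A z) = ∑ p ∈ S, p.1 ⊗ₜ[k] (epsR k A z * p.2) := comul_epsR₂ h S hS z
  have HR := congrArg ((TensorProduct.rid k A).toLinearMap ∘ₗ
    LinearMap.lTensor A (ε ∘ₗ LinearMap.mulRight k x ∘ₗ LinearMap.mulLeft k (epsR k A z)))
    (hR h S hS)
  simp only [map_sum, LinearMap.comp_apply, LinearMap.lTensor_tmul, LinearEquiv.coe_coe,
    TensorProduct.rid_tmul, LinearMap.mulRight_apply, LinearMap.mulLeft_apply] at HR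
  calc epsR k A (epsR k A z * x)
      = ∑ q ∈ S, ε (q.2 * (epsR k A z * x)) • q.1 := epsR_apply h S hS _
    _ = ∑ q ∈ S, ∑ p ∈ S, (ε (q.2 * p.1) * ε (epsR k A z * p.2 * x)) • q.1 := by
        refine Finset.sum_congr rfl fun q _ => ?_
        rw [← mul_assoc, ← wc1_rep h hu q.2 x, Finset.sum_smul]
    _ = ∑ p ∈ S, ε (epsR k A z * p.2 * x) • epsR k A p.1 := by
        rw [Finset.sum_comm]
        refine Finset.sum_congr rfl fun p _ => ?_
        rw [epsR_apply h S hS p.1, Finset.smul_sum]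
        exact Finset.sum_congr rfl fun q _ => by
          rw [smul_smul, mul_comm (ε (q.2 * p.1))]
    _ = ∑ p ∈ S, ε (epsR k A z * p.2 * x) • p.1 := HR
    _ = epsR k A z * epsR k A x := hM16 h S hS z x

theorem hQ' (x : A) :
    ∑ p ∈ S, epsR k A (p.1 * x) ⊗ₜ[k] p.2 = ∑ p ∈ S, (p.1 * epsR k A x) ⊗ₜ[k] p.2 := by
  have H1 := congrArg (LinearMap.rTensor A (epsR k A ∘ₗ LinearMap.mulRight k x)) (hR h S hS)
  have H2 := congrArg (LinearMap.rTensor A (LinearMap.mulRight k (epsR k A x))) (hR h S hS)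
  simp only [map_sum, LinearMap.rTensor_tmul, LinearMap.comp_apply,
    LinearMap.mulRight_apply] at H1 H2
  rw [← H1, ← H2]
  exact Finset.sum_congr rfl fun p _ => by rw [hM17 h S hS]

theorem hK' (x y : A) :
    epsR k A (epsL k A x * y) = epsR k A y * epsR k A x := by
  have hu : Δ (epsL k A x) = ∑ p ∈ S, (p.1 * epsL k A x) ⊗ₜ[k] p.2 := comul_epsL₂_s7 h S hS x
  have HQ := congrArg ((TensorProduct.rid k A).toLinearMap ∘ₗ
    LinearMap.lTensor A (ε ∘ₗ LinearMap.mulRight k y)) (hQ' h S hS x)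
  simp only [map_sum, LinearMap.comp_apply, LinearMap.lTensor_tmul, LinearEquiv.coe_coe,
    TensorProduct.rid_tmul, LinearMap.mulRight_apply] at HQ
  calc epsR k A (epsL k A x * y)
      = ∑ q ∈ S, ε (q.2 * (epsL k A x * y)) • q.1 := epsR_apply h S hS _
    _ = ∑ q ∈ S, ∑ p ∈ S, (ε (q.2 * (p.1 * epsL k A x)) * ε (p.2 * y)) • q.1 := by
        refine Finset.sum_congr rfl fun q _ => ?_
        rw [← mul_assoc, ← wc1_rep h hu q.2 y, Finset.sum_smul]
    _ = ∑ p ∈ S, ε (p.2 * y) • epsR k A (p.1 * epsL k A x) := by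
        rw [Finset.sum_comm]
        refine Finset.sum_congr rfl fun p _ => ?_
        rw [epsR_apply h S hS (p.1 * epsL k A x), Finset.smul_sum]
        exact Finset.sum_congr rfl fun q _ => by
          rw [smul_smul, mul_comm (ε (q.2 * (p.1 * epsL k A x)))]
    _ = ∑ p ∈ S, ε (p.2 * y) • epsR k A (p.1 * x) :=
        Finset.sum_congr rfl fun p _ => by rw [epsR_mul_epsL h S hS]
    _ = ∑ p ∈ S, ε (p.2 * y) • (p.1 * epsR k A x) := HQ
    _ = epsR k A y * epsR k A x := by
        rw [epsR_apply h S hS y, Finset.sum_mul]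
        exact Finset.sum_congr rfl fun p _ => by rw [smul_mul_assoc]

end WBA


/-- In a weak bialgebra `A`, the restrictions `ε^l|_{A^r} : A^r → A^l` and
`ε^r|_{A^l} : A^l → A^r` are mutually inverse algebra anti-isomorphisms. -/
theorem epsL_epsR_anti_isomorphisms (k A : Type*) [Field k] [Ring A] [Algebra k A]
    [Coalgebra k A] (h : IsWeakBialgebra k A) :
    (∀ x ∈ Set.range (epsR k A), ∀ y ∈ Set.range (epsR k A),
      epsL k A (x * y) = epsL k A y * epsL k A x) ∧
    (∀ x ∈ Set.range (epsL k A), ∀ y ∈ Set.range (epsL k A),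
      epsR k A (x * y) = epsR k A y * epsR k A x) ∧
    epsL k A 1 = 1 ∧ epsR k A 1 = 1 ∧
    (∀ x ∈ Set.range (epsR k A), epsR k A (epsL k A x) = x) ∧
    (∀ y ∈ Set.range (epsL k A), epsL k A (epsR k A y) = y) := by
  obtain ⟨S, hS⟩ := TensorProduct.exists_finset (Coalgebra.comul (R := k) (1 : A))
  refine ⟨?_, ?_, epsL_one h S hS, epsR_one h S hS, ?_, ?_⟩
  · rintro x ⟨a, rfl⟩ y ⟨b, rfl⟩
    rw [epsL_mul_epsR h S hS, hK h S hS, epsL_epsR h S hS, epsL_epsR h S hS]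
  · rintro x ⟨a, rfl⟩ y ⟨b, rfl⟩
    rw [epsR_mul_epsL h S hS, hK' h S hS, epsR_epsL h S hS, epsR_epsL h S hS]
  · rintro x ⟨a, rfl⟩
    rw [epsL_epsR h S hS, epsR_epsL h S hS]
  · rintro y ⟨a, rfl⟩
    rw [epsR_epsL h S hS, epsL_epsR h S hS]
end

section
/- Let A be a weak bialgebra over k. Then A^l carries a separable Frobenius algebra structure with separability idempotent p := Σ ε^l(1₍₁₎) ⊗ 1₍₂₎ ∈ A^l ⊗ A^l and counit ε|_{A^l}. In particular, p satisfies: multiplying its two tensor factors gives 1, and for all x ∈ A^l, (x ⊗ 1)p = p(1 ⊗ x). -/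
open TensorProduct

noncomputable section Aux

namespace WeakBialgebraAux

open TensorProduct LinearMap

variable {k A : Type*} [Field k] [Ring A] [Algebra k A] [Coalgebra k A]

local notation "ε" => (Coalgebra.counit : A →ₗ[k] k)
local notation "Δ" => (Coalgebra.comul : A →ₗ[k] A ⊗[k] A)

variable (S : Finset (A × A))
  (hd : (Coalgebra.comul (R := k) (1 : A)) = ∑ z ∈ S, z.1 ⊗ₜ[k] z.2)

include hd

theorem epsL_sum (x : A) : epsL k A x = ∑ z ∈ S, ε (z.1 * x) • z.2 := by
  simp only [epsL, LinearMap.coe_comp, LinearEquiv.coe_coe, Function.comp_apply,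
    LinearMap.flip_apply, TensorProduct.mk_apply, LinearMap.mulLeft_apply, hd,
    Finset.sum_mul, Algebra.TensorProduct.tmul_mul_tmul, mul_one, map_sum,
    TensorProduct.map_tmul, LinearMap.id_coe, id_eq, TensorProduct.lid_tmul]

theorem epsR_sum (x : A) : epsR k A x = ∑ z ∈ S, ε (z.2 * x) • z.1 := by
  simp only [epsR, LinearMap.coe_comp, LinearEquiv.coe_coe, Function.comp_apply,
    TensorProduct.mk_apply, LinearMap.mulLeft_apply, hd,
    Finset.sum_mul, Algebra.TensorProduct.tmul_mul_tmul, one_mul, mul_one, map_sum,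
    TensorProduct.map_tmul, LinearMap.id_coe, id_eq, TensorProduct.rid_tmul]

/-- counit axiom at 1, left -/
theorem counit_one_left : ∑ z ∈ S, ε z.1 • z.2 = (1 : A) := by
  have := Coalgebra.rTensor_counit_comul (R := k) (1 : A)
  rw [hd] at this
  have := congrArg (TensorProduct.lid k A) this
  simpa [map_sum] using this

/-- counit axiom at 1, right -/
theorem counit_one_right : ∑ z ∈ S, ε z.2 • z.1 = (1 : A) := by
  have := Coalgebra.lTensor_counit_comul (R := k) (1 : A)
  rw [hd] at this
  have := congrArg (TensorProduct.rid k A) this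
  simpa [map_sum] using this

/-- W in sum-of-comul form -/
theorem W_def : (LinearMap.lTensor A (Coalgebra.comul (R := k) (A := A))) (Coalgebra.comul 1)
    = ∑ z ∈ S, z.1 ⊗ₜ[k] (Δ z.2) := by
  rw [hd, map_sum]; simp [LinearMap.lTensor_tmul]

variable (h : IsWeakBialgebra k A)
include h

/-- weak counit 2 with middle 1 -/
theorem wc2 (a x : A) : ∑ z ∈ S, ε (z.1 * x) * ε (a * z.2) = ε (a * x) := by
  have := h.weak_counit₂ a 1 x
  rw [hd] at this
  simpa [map_sum, LinearMap.mul'_apply] using this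

/-- weak counit 1 with middle 1 -/
theorem wc1 (a x : A) : ∑ z ∈ S, ε (a * z.1) * ε (z.2 * x) = ε (a * x) := by
  have := h.weak_counit₁ a 1 x
  rw [hd] at this
  simpa [map_sum, LinearMap.mul'_apply] using this

/-- F3' : ε (a * εˡ x) = ε (a x) -/
theorem counit_mul_epsL (a x : A) : ε (a * epsL k A x) = ε (a * x) := by
  rw [epsL_sum S hd x, Finset.mul_sum, map_sum]
  rw [← wc2 S hd h a x]
  refine Finset.sum_congr rfl fun z _ => ?_
  rw [mul_smul_comm, map_smul, smul_eq_mul, mul_comm]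

/-- mirror: ε (εʳ x * a)?? not needed; instead: ε (a * εʳ x) -/
theorem counit_mul_epsR (a x : A) : ε (a * epsR k A x) = ε (a * x) := by
  rw [epsR_sum S hd x, Finset.mul_sum, map_sum]
  rw [← wc1 S hd h a x]
  refine Finset.sum_congr rfl fun z _ => ?_
  rw [mul_smul_comm, map_smul, smul_eq_mul, mul_comm]

/-- εˡ ∘ εʳ = εˡ -/
theorem epsL_epsR (x : A) : epsL k A (epsR k A x) = epsL k A x :=
  calc epsL k A (epsR k A x) = ∑ z ∈ S, ε (z.1 * epsR k A x) • z.2 := epsL_sum S hd _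
    _ = ∑ z ∈ S, ε (z.1 * x) • z.2 :=
        Finset.sum_congr rfl fun z _ => by rw [counit_mul_epsR S hd h]
    _ = epsL k A x := (epsL_sum S hd x).symm

/-- εˡ idempotent -/
theorem epsL_epsL (x : A) : epsL k A (epsL k A x) = epsL k A x :=
  calc epsL k A (epsL k A x) = ∑ z ∈ S, ε (z.1 * epsL k A x) • z.2 := epsL_sum S hd _
    _ = ∑ z ∈ S, ε (z.1 * x) • z.2 :=
        Finset.sum_congr rfl fun z _ => by rw [counit_mul_epsL S hd h]
    _ = epsL k A x := (epsL_sum S hd x).symm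

/-- weak unit 1, sum form -/
theorem W1_eq : (∑ z ∈ S, z.1 ⊗ₜ[k] (Δ z.2))
    = ∑ z ∈ S, ∑ w ∈ S, z.1 ⊗ₜ[k] ((z.2 * w.1) ⊗ₜ[k] w.2) := by
  rw [← W_def S hd, ← h.weak_unit₁, hd]
  simp only [iota12, iota23, map_sum, TensorProduct.map_tmul, LinearMap.id_coe, id_eq,
    LinearMap.flip_apply, TensorProduct.mk_apply, Finset.sum_mul_sum,
    Algebra.TensorProduct.tmul_mul_tmul, mul_one, one_mul]

/-- weak unit 2, sum form -/
theorem W2_eq : (∑ z ∈ S, z.1 ⊗ₜ[k] (Δ z.2))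
    = ∑ z ∈ S, ∑ w ∈ S, w.1 ⊗ₜ[k] ((z.1 * w.2) ⊗ₜ[k] z.2) := by
  rw [← W_def S hd, ← h.weak_unit₂, hd]
  simp only [iota12, iota23, map_sum, TensorProduct.map_tmul, LinearMap.id_coe, id_eq,
    LinearMap.flip_apply, TensorProduct.mk_apply, Finset.sum_mul_sum,
    Algebra.TensorProduct.tmul_mul_tmul, mul_one, one_mul]


/-- Lemma 1a : Δ(εˡ y) = (εˡ y ⊗ 1) Δ1, in sum form -/
theorem comul_epsL₁ (y : A) :
    Δ (epsL k A y) = ∑ w ∈ S, (epsL k A y * w.1) ⊗ₜ[k] w.2 := by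
  set L : A ⊗[k] (A ⊗[k] A) →ₗ[k] A ⊗[k] A :=
    (TensorProduct.lid k (A ⊗[k] A)).toLinearMap ∘ₗ
      TensorProduct.map (ε ∘ₗ LinearMap.mulRight k y) LinearMap.id with hL
  have hLt : ∀ (a : A) (t : A ⊗[k] A), L (a ⊗ₜ[k] t) = ε (a * y) • t := by
    intro a t
    simp [hL]
  have hw := congrArg L (W1_eq S hd h)
  have lhs : L (∑ z ∈ S, z.1 ⊗ₜ[k] (Δ z.2)) = Δ (epsL k A y) := by
    rw [map_sum, epsL_sum S hd y, map_sum]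
    exact Finset.sum_congr rfl fun z _ => by rw [hLt, map_smul]
  have rhs : L (∑ z ∈ S, ∑ w ∈ S, z.1 ⊗ₜ[k] ((z.2 * w.1) ⊗ₜ[k] w.2))
      = ∑ w ∈ S, (epsL k A y * w.1) ⊗ₜ[k] w.2 := by
    rw [map_sum]
    simp_rw [map_sum, hLt]
    rw [Finset.sum_comm]
    refine Finset.sum_congr rfl fun w _ => ?_
    rw [epsL_sum S hd y, Finset.sum_mul, TensorProduct.sum_tmul]
    exact Finset.sum_congr rfl fun z _ => by rw [smul_mul_assoc, smul_tmul']
  rw [← lhs, hw, rhs]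

/-- Lemma 1b : Δ(εˡ y) = Δ1 (εˡ y ⊗ 1), in sum form -/
theorem comul_epsL₂ (y : A) :
    Δ (epsL k A y) = ∑ w ∈ S, (w.1 * epsL k A y) ⊗ₜ[k] w.2 := by
  set L : A ⊗[k] (A ⊗[k] A) →ₗ[k] A ⊗[k] A :=
    (TensorProduct.lid k (A ⊗[k] A)).toLinearMap ∘ₗ
      TensorProduct.map (ε ∘ₗ LinearMap.mulRight k y) LinearMap.id with hL
  have hLt : ∀ (a : A) (t : A ⊗[k] A), L (a ⊗ₜ[k] t) = ε (a * y) • t := by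
    intro a t
    simp [hL]
  have hw := congrArg L (W2_eq S hd h)
  have lhs : L (∑ z ∈ S, z.1 ⊗ₜ[k] (Δ z.2)) = Δ (epsL k A y) := by
    rw [map_sum, epsL_sum S hd y, map_sum]
    exact Finset.sum_congr rfl fun z _ => by rw [hLt, map_smul]
  have rhs : L (∑ z ∈ S, ∑ w ∈ S, w.1 ⊗ₜ[k] ((z.1 * w.2) ⊗ₜ[k] z.2))
      = ∑ z ∈ S, (z.1 * epsL k A y) ⊗ₜ[k] z.2 := by
    rw [map_sum]
    simp_rw [map_sum, hLt]
    refine Finset.sum_congr rfl fun z _ => ?_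
    rw [epsL_sum S hd y, Finset.mul_sum, TensorProduct.sum_tmul]
    exact Finset.sum_congr rfl fun w _ => by rw [mul_smul_comm, smul_tmul']
  rw [← lhs, hw, rhs]

/-- F2 : Σ 1₁ ⊗ εˡ(1₂) = Δ1 -/
theorem sum_tmul_epsL :
    ∑ z ∈ S, z.1 ⊗ₜ[k] epsL k A z.2 = Coalgebra.comul (R := k) (1 : A) := by
  set f : A ⊗[k] A →ₗ[k] A :=
    (TensorProduct.lid k A).toLinearMap ∘ₗ LinearMap.rTensor A ε with hf
  have hfc : ∀ b : A, f (Δ b) = b := by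
    intro b
    rw [hf]
    simp [Coalgebra.rTensor_counit_comul (R := k) b]
  set L : A ⊗[k] (A ⊗[k] A) →ₗ[k] A ⊗[k] A := LinearMap.lTensor A f with hL
  have hw := congrArg L (W2_eq S hd h)
  have lhs : L (∑ z ∈ S, z.1 ⊗ₜ[k] (Δ z.2)) = Coalgebra.comul (R := k) (1 : A) := by
    rw [map_sum, hd]
    exact Finset.sum_congr rfl fun z _ => by rw [hL, LinearMap.lTensor_tmul, hfc]
  have rhs : L (∑ z ∈ S, ∑ w ∈ S, w.1 ⊗ₜ[k] ((z.1 * w.2) ⊗ₜ[k] z.2))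
      = ∑ w ∈ S, w.1 ⊗ₜ[k] epsL k A w.2 := by
    rw [map_sum]
    simp_rw [map_sum, hL, LinearMap.lTensor_tmul]
    rw [Finset.sum_comm]
    refine Finset.sum_congr rfl fun w _ => ?_
    rw [epsL_sum S hd w.2, TensorProduct.tmul_sum]
    refine Finset.sum_congr rfl fun z _ => ?_
    rw [hf]
    simp
  rw [← rhs, ← hw, lhs]

/-- Δ1 * Δ1 = Δ1 in sum form -/
theorem dd_sum :
    ∑ z ∈ S, ∑ w ∈ S, (z.1 * w.1) ⊗ₜ[k] (z.2 * w.2) = ∑ u ∈ S, u.1 ⊗ₜ[k] u.2 := by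
  have hdd : Coalgebra.comul (R := k) ((1 : A) * 1) =
      Coalgebra.comul (R := k) (1 : A) * Coalgebra.comul (R := k) (1 : A) := h.comul_mul 1 1
  rw [one_mul, hd, Finset.sum_mul_sum] at hdd
  simp only [Algebra.TensorProduct.tmul_mul_tmul] at hdd
  exact hdd.symm


/-- helper extraction map -/
def extractF (φ : A →ₗ[k] k) : A ⊗[k] A →ₗ[k] A :=
  (TensorProduct.lid k A).toLinearMap ∘ₗ TensorProduct.map φ LinearMap.id

omit hd h in
@[simp] theorem extractF_tmul (φ : A →ₗ[k] k) (u v : A) :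
    extractF φ (u ⊗ₜ[k] v) = φ u • v := by
  simp [extractF]

omit hd h in
theorem counit_extract (b : A) : extractF (A := A) ε (Δ b) = b := by
  have h1 := Coalgebra.rTensor_counit_comul (R := k) b
  have : extractF (A := A) ε (Δ b) =
      (TensorProduct.lid k A) (LinearMap.rTensor A ε (Δ b)) := by
    rfl
  rw [this, h1]
  simp

/-- Subgoal A, part 1 -/
theorem mul_epsL_sum (y a : A) :
    epsL k A y * epsL k A a = ∑ u ∈ S, ε (epsL k A y * u.1 * a) • u.2 := by
  set x := epsL k A y with hx
  have e0 : x * epsL k A a = extractF ε (Δ (x * epsL k A a)) :=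
    (counit_extract (x * epsL k A a)).symm
  rw [e0, h.comul_mul, comul_epsL₁ S hd h y, ← hx, comul_epsL₂ S hd h a,
    Finset.sum_mul_sum]
  simp only [Algebra.TensorProduct.tmul_mul_tmul, map_sum, extractF_tmul]
  have step : ∀ w ∈ S, ∀ z ∈ S, (ε (x * w.1 * (z.1 * epsL k A a)) • (w.2 * z.2) : A)
      = ε (x * (w.1 * z.1) * a) • (w.2 * z.2) := by
    intro w _ z _
    rw [show x * w.1 * (z.1 * epsL k A a) = x * w.1 * z.1 * epsL k A a by
          rw [mul_assoc (x * w.1)],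
      counit_mul_epsL S hd h, mul_assoc x w.1 z.1]
  rw [Finset.sum_congr rfl fun w hw => Finset.sum_congr rfl fun z hz => step w hw z hz]
  have := congrArg (extractF (ε ∘ₗ LinearMap.mulRight k a ∘ₗ LinearMap.mulLeft k x))
    (dd_sum S hd h)
  simp only [map_sum, extractF_tmul, LinearMap.coe_comp, Function.comp_apply,
    LinearMap.mulLeft_apply, LinearMap.mulRight_apply] at this
  calc ∑ w ∈ S, ∑ z ∈ S, ε (x * (w.1 * z.1) * a) • (w.2 * z.2)
      = ∑ u ∈ S, ε (x * u.1 * a) • u.2 := this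
    _ = _ := rfl

/-- Subgoal A, part 2 -/
theorem epsL_mul_sum (y a : A) :
    epsL k A (epsL k A y * a) = ∑ u ∈ S, ε (epsL k A y * u.1 * a) • u.2 := by
  set x := epsL k A y with hx
  rw [epsL_sum S hd (x * a)]
  have e1 : ∀ z : A × A, ε (z.1 * (x * a)) = ∑ w ∈ S, ε (x * w.1 * a) * ε (z.1 * w.2) := by
    intro z
    have := h.weak_counit₂ z.1 x a
    rw [comul_epsL₁ S hd h y, ← hx, map_sum] at this
    simp only [TensorProduct.map_tmul, LinearMap.coe_comp, Function.comp_apply,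
      LinearMap.mulRight_apply, LinearMap.mulLeft_apply, map_sum,
      LinearMap.mul'_apply] at this
    rw [← mul_assoc z.1 x a]
    exact this.symm
  simp_rw [e1, Finset.sum_smul, mul_smul]
  rw [Finset.sum_comm]
  have e2 : ∀ w ∈ S, ∑ z ∈ S, ε (x * w.1 * a) • ε (z.1 * w.2) • z.2
      = ε (x * w.1 * a) • epsL k A w.2 := by
    intro w _
    rw [epsL_sum S hd w.2, Finset.smul_sum]
  rw [Finset.sum_congr rfl e2]
  have := congrArg (extractF (ε ∘ₗ LinearMap.mulRight k a ∘ₗ LinearMap.mulLeft k x))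
    (sum_tmul_epsL S hd h)
  simp only [map_sum, extractF_tmul, LinearMap.coe_comp, Function.comp_apply,
    LinearMap.mulLeft_apply, LinearMap.mulRight_apply, hd] at this
  exact this

/-- Subgoal A : x εˡ(a) = εˡ(x a) for x in the range of εˡ -/
theorem epsL_mul (y a : A) :
    epsL k A y * epsL k A a = epsL k A (epsL k A y * a) := by
  rw [mul_epsL_sum S hd h y a, epsL_mul_sum S hd h y a]


/-- right multiplication by an element of A^l, via the counit -/
theorem mul_epsL_right (b y : A) :
    b * epsL k A y = extractF ε (Δ b * (epsL k A y ⊗ₜ[k] (1 : A))) := by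
  have hx : Δ (epsL k A y) = Δ (1 : A) * (epsL k A y ⊗ₜ[k] (1 : A)) := by
    rw [comul_epsL₂ S hd h y, hd, Finset.sum_mul]
    simp [Algebra.TensorProduct.tmul_mul_tmul]
  have h1 : Δ (b * epsL k A y) = Δ b * (epsL k A y ⊗ₜ[k] (1 : A)) := by
    rw [h.comul_mul b (epsL k A y), hx, ← mul_assoc, ← h.comul_mul b 1, mul_one]
  rw [← h1, counit_extract]

theorem epsL_epsR_sum (u : A) :
    ∑ z ∈ S, ε (z.2 * u) • epsL k A z.1 = epsL k A u := by
  have e : ∑ z ∈ S, ε (z.2 * u) • epsL k A z.1 = epsL k A (epsR k A u) := by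
    rw [epsR_sum S hd u, map_sum]
    simp [map_smul]
  rw [e, epsL_epsR S hd h]

/-- the Casimir / commutation property of p -/
theorem casimir_sum (y : A) :
    (epsL k A y ⊗ₜ[k] (1 : A)) * (∑ z ∈ S, epsL k A z.1 ⊗ₜ[k] z.2)
      = (∑ z ∈ S, epsL k A z.1 ⊗ₜ[k] z.2) * ((1 : A) ⊗ₜ[k] epsL k A y) := by
  set x := epsL k A y with hxd
  -- LHS
  have lhs1 : (x ⊗ₜ[k] (1 : A)) * (∑ z ∈ S, epsL k A z.1 ⊗ₜ[k] z.2)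
      = ∑ z ∈ S, epsL k A (x * z.1) ⊗ₜ[k] z.2 := by
    rw [Finset.mul_sum]
    refine Finset.sum_congr rfl fun z _ => ?_
    rw [Algebra.TensorProduct.tmul_mul_tmul, one_mul, hxd, epsL_mul S hd h y z.1]
  have h12 : (∑ w ∈ S, (x * w.1) ⊗ₜ[k] w.2) = ∑ w ∈ S, (w.1 * x) ⊗ₜ[k] w.2 := by
    rw [← comul_epsL₁ S hd h y, ← comul_epsL₂ S hd h y]
  have h12' : (∑ w ∈ S, epsL k A (x * w.1) ⊗ₜ[k] w.2)
      = ∑ w ∈ S, epsL k A (w.1 * x) ⊗ₜ[k] w.2 := by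
    have := congrArg (TensorProduct.map (epsL k A) LinearMap.id) h12
    simpa only [map_sum, TensorProduct.map_tmul, LinearMap.id_coe, id_eq] using this
  -- RHS
  have rhs1 : (∑ z ∈ S, epsL k A z.1 ⊗ₜ[k] z.2) * ((1 : A) ⊗ₜ[k] x)
      = ∑ z ∈ S, epsL k A z.1 ⊗ₜ[k] extractF ε (Δ z.2 * (x ⊗ₜ[k] (1 : A))) := by
    rw [Finset.sum_mul]
    refine Finset.sum_congr rfl fun z _ => ?_
    rw [Algebra.TensorProduct.tmul_mul_tmul, mul_one, hxd, mul_epsL_right S hd h z.2 y]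
  set M : A ⊗[k] (A ⊗[k] A) →ₗ[k] A ⊗[k] A :=
    TensorProduct.map (epsL k A)
      (extractF ε ∘ₗ LinearMap.mulRight k (x ⊗ₜ[k] (1 : A))) with hM
  have rhs2 : (∑ z ∈ S, epsL k A z.1 ⊗ₜ[k] extractF ε (Δ z.2 * (x ⊗ₜ[k] (1 : A))))
      = M (∑ z ∈ S, z.1 ⊗ₜ[k] (Δ z.2)) := by
    rw [map_sum]
    refine Finset.sum_congr rfl fun z _ => ?_
    rw [hM, TensorProduct.map_tmul]
    rfl
  have rhs3 : M (∑ z ∈ S, ∑ w ∈ S, z.1 ⊗ₜ[k] ((z.2 * w.1) ⊗ₜ[k] w.2))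
      = ∑ w ∈ S, epsL k A (w.1 * x) ⊗ₜ[k] w.2 := by
    rw [map_sum]
    simp_rw [map_sum, hM, TensorProduct.map_tmul]
    rw [Finset.sum_comm]
    refine Finset.sum_congr rfl fun w _ => ?_
    have e1 : ∀ z ∈ S, epsL k A z.1 ⊗ₜ[k]
        (extractF ε ∘ₗ LinearMap.mulRight k (x ⊗ₜ[k] (1 : A))) ((z.2 * w.1) ⊗ₜ[k] w.2)
        = (ε (z.2 * (w.1 * x)) • epsL k A z.1) ⊗ₜ[k] w.2 := by
      intro z _
      rw [LinearMap.coe_comp, Function.comp_apply, LinearMap.mulRight_apply,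
        Algebra.TensorProduct.tmul_mul_tmul, mul_one, extractF_tmul,
        mul_assoc z.2 w.1 x, TensorProduct.tmul_smul, TensorProduct.smul_tmul']
    rw [Finset.sum_congr rfl e1, ← TensorProduct.sum_tmul, epsL_epsR_sum S hd h (w.1 * x)]
  have rhsAll : (∑ z ∈ S, epsL k A z.1 ⊗ₜ[k] z.2) * ((1 : A) ⊗ₜ[k] x)
      = ∑ w ∈ S, epsL k A (w.1 * x) ⊗ₜ[k] w.2 := by
    rw [rhs1, rhs2, W1_eq S hd h, rhs3]
  exact lhs1.trans (h12'.trans rhsAll.symm)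


/-- multiplying the two legs of p gives 1 -/
theorem mulP_one : LinearMap.mul' k A (∑ z ∈ S, epsL k A z.1 ⊗ₜ[k] z.2) = 1 := by
  rw [map_sum]
  simp only [LinearMap.mul'_apply]
  have e1 : ∀ z ∈ S, epsL k A z.1 * z.2 = ∑ w ∈ S, ε (w.1 * z.1) • (w.2 * z.2) := by
    intro z _
    rw [epsL_sum S hd z.1, Finset.sum_mul]
    simp [smul_mul_assoc]
  rw [Finset.sum_congr rfl e1, Finset.sum_comm]
  have e2 := congrArg (extractF ε) (dd_sum S hd h)
  simp only [map_sum, extractF_tmul] at e2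
  rw [e2, counit_one_left S hd]

/-- p = (εˡ ⊗ εˡ)(Δ1) -/
theorem P_eq : ∑ z ∈ S, epsL k A z.1 ⊗ₜ[k] epsL k A z.2
    = ∑ z ∈ S, epsL k A z.1 ⊗ₜ[k] z.2 := by
  have e := congrArg (TensorProduct.map (epsL k A) LinearMap.id) (sum_tmul_epsL S hd h)
  rw [hd] at e
  simpa only [map_sum, TensorProduct.map_tmul, LinearMap.id_coe, id_eq] using e

theorem sum_counit_epsL_mul (y : A) :
    ∑ z ∈ S, ε (epsL k A y * z.1) • z.2 = epsL k A y := by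
  have e := congrArg (extractF ε) (comul_epsL₁ S hd h y)
  simp only [map_sum, extractF_tmul] at e
  rw [← e, counit_extract]

omit h in
theorem epsL_one : epsL k A (1 : A) = 1 := by
  rw [epsL_sum S hd 1]
  simp only [mul_one]
  exact counit_one_left S hd

end WeakBialgebraAux

end Aux

/-- In a weak bialgebra `A`, the base algebra `A^l` carries a separable
Frobenius algebra structure with separability idempotent `p = Σ ε^l(1₍₁₎) ⊗ 1₍₂₎` and counit
`ε|_{A^l}`: with `s(x) := (x ⊗ 1)·p` one has (on `A^l`) the bimodule property, the Frobenius
counit and coassociativity laws, and separability `m ∘ s = id`.  In particular multiplying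
the two tensor factors of `p` gives `1`, and `(x ⊗ 1)·p = p·(1 ⊗ x)` for every `x ∈ A^l`. -/
theorem epsL_range_separable_frobenius (k A : Type*) [Field k] [Ring A] [Algebra k A]
    [Coalgebra k A] (h : IsWeakBialgebra k A) :
    ∀ p : A ⊗[k] A,
      p = (TensorProduct.map (epsL k A) LinearMap.id) (Coalgebra.comul (R := k) (1 : A)) →
      ∀ s : A →ₗ[k] A ⊗[k] A,
        s = LinearMap.mulRight k p ∘ₗ (TensorProduct.mk k A A).flip 1 →
      -- p lies in A^l ⊗ A^l
      p ∈ LinearMap.range (TensorProduct.map (epsL k A) (epsL k A)) ∧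
      -- multiplying the two factors of p gives 1
      LinearMap.mul' k A p = 1 ∧
      -- (x ⊗ 1) p = p (1 ⊗ x) for x ∈ A^l
      (∀ x ∈ Set.range (epsL k A), (x ⊗ₜ[k] (1 : A)) * p = p * ((1 : A) ⊗ₜ[k] x)) ∧
      -- the bimodule property of s on A^l
      (∀ x ∈ Set.range (epsL k A), ∀ y ∈ Set.range (epsL k A),
        s x * ((1 : A) ⊗ₜ[k] y) = s (x * y) ∧ s (x * y) = (x ⊗ₜ[k] (1 : A)) * s y) ∧
      -- the counit (= ε restricted to A^l) laws for s
      (∀ x ∈ Set.range (epsL k A),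
        (TensorProduct.lid k A)
          ((TensorProduct.map (Coalgebra.counit : A →ₗ[k] k) LinearMap.id) (s x)) = x) ∧
      (∀ x ∈ Set.range (epsL k A),
        (TensorProduct.rid k A)
          ((TensorProduct.map LinearMap.id (Coalgebra.counit : A →ₗ[k] k)) (s x)) = x) ∧
      -- coassociativity of s on A^l
      (∀ x ∈ Set.range (epsL k A),
        (TensorProduct.assoc k A A A) ((TensorProduct.map s LinearMap.id) (s x))
          = (TensorProduct.map LinearMap.id s) (s x)) ∧
      -- separability : m ∘ s = id on A^l
      (∀ x ∈ Set.range (epsL k A), LinearMap.mul' k A (s x) = x) := by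

  intro p hp s hs
  classical
  obtain ⟨S, hd⟩ := TensorProduct.exists_finset (Coalgebra.comul (R := k) (1 : A))
  open WeakBialgebraAux in
  have hp' : p = ∑ z ∈ S, epsL k A z.1 ⊗ₜ[k] z.2 := by
    rw [hp, hd, map_sum]
    simp only [TensorProduct.map_tmul, LinearMap.id_coe, id_eq]
  have hp2 : p = ∑ z ∈ S, epsL k A z.1 ⊗ₜ[k] epsL k A z.2 := by
    rw [hp', WeakBialgebraAux.P_eq S hd h]
  have hs' : ∀ x : A, s x = (x ⊗ₜ[k] (1 : A)) * p := by
    intro x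
    rw [hs]
    simp [LinearMap.mulRight_apply]
  have hcas : ∀ y : A, (epsL k A y ⊗ₜ[k] (1 : A)) * p = p * ((1 : A) ⊗ₜ[k] epsL k A y) := by
    intro y
    rw [hp']
    exact WeakBialgebraAux.casimir_sum S hd h y
  have hmul : LinearMap.mul' k A p = 1 := by
    rw [hp']
    exact WeakBialgebraAux.mulP_one S hd h
  have key : ∀ u v : A, ((u * v) ⊗ₜ[k] (1 : A)) = (u ⊗ₜ[k] (1 : A)) * (v ⊗ₜ[k] (1 : A)) := by
    intro u v
    rw [Algebra.TensorProduct.tmul_mul_tmul, one_mul]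
  refine ⟨⟨Coalgebra.comul (R := k) (1 : A), ?_⟩, hmul, ?_, ?_, ?_, ?_, ?_, ?_⟩
  · -- p ∈ range (εˡ ⊗ εˡ)
    rw [hd, map_sum]
    simp only [TensorProduct.map_tmul]
    rw [WeakBialgebraAux.P_eq S hd h, ← hp']
  · -- Casimir
    rintro x ⟨y, rfl⟩
    exact hcas y
  · -- bimodule
    rintro x ⟨y₁, rfl⟩ y ⟨y₂, rfl⟩
    constructor
    · rw [hs', hs', key, mul_assoc, mul_assoc, hcas y₂]
    · rw [hs', hs', key, mul_assoc]
  · -- left counit law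
    rintro x ⟨y, rfl⟩
    rw [hs', hp', Finset.mul_sum]
    simp only [Algebra.TensorProduct.tmul_mul_tmul, one_mul, map_sum,
      TensorProduct.map_tmul, LinearMap.id_coe, id_eq, TensorProduct.lid_tmul]
    have e1 : ∀ z ∈ S, ((Coalgebra.counit : A →ₗ[k] k) (epsL k A y * epsL k A z.1) • z.2 : A)
        = (Coalgebra.counit : A →ₗ[k] k) (epsL k A y * z.1) • z.2 := by
      intro z _
      rw [WeakBialgebraAux.counit_mul_epsL S hd h (epsL k A y) z.1]
    rw [Finset.sum_congr rfl e1, WeakBialgebraAux.sum_counit_epsL_mul S hd h y]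
  · -- right counit law
    rintro x ⟨y, rfl⟩
    rw [hs', hp', Finset.mul_sum]
    simp only [Algebra.TensorProduct.tmul_mul_tmul, one_mul, map_sum,
      TensorProduct.map_tmul, LinearMap.id_coe, id_eq, TensorProduct.rid_tmul]
    have e1 : ∀ z ∈ S, ((Coalgebra.counit : A →ₗ[k] k) (z.2 : A) • (epsL k A y * epsL k A z.1) : A)
        = epsL k A y * ((Coalgebra.counit : A →ₗ[k] k) (z.2 : A) • epsL k A z.1) := by
      intro z _
      rw [mul_smul_comm]
    rw [Finset.sum_congr rfl e1, ← Finset.mul_sum]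
    have e2 : ∑ z ∈ S, ((Coalgebra.counit : A →ₗ[k] k) (z.2 : A) • epsL k A z.1 : A)
        = epsL k A (∑ z ∈ S, (Coalgebra.counit : A →ₗ[k] k) (z.2 : A) • z.1) := by
      rw [map_sum]
      simp only [map_smul]
    rw [e2, WeakBialgebraAux.counit_one_right S hd, WeakBialgebraAux.epsL_one S hd, mul_one]
  · -- coassociativity
    rintro x ⟨y, rfl⟩
    have hsa : s (epsL k A y) = ∑ z ∈ S, (epsL k A y * epsL k A z.1) ⊗ₜ[k] epsL k A z.2 := by
      rw [hs', hp2, Finset.mul_sum]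
      simp only [Algebra.TensorProduct.tmul_mul_tmul, one_mul]
    have hcomp : ∀ u : A, s (epsL k A y * epsL k A u)
        = ∑ w ∈ S, (epsL k A y * epsL k A w.1) ⊗ₜ[k] (epsL k A w.2 * epsL k A u) := by
      intro u
      rw [hs', key, mul_assoc, hcas u, hp2, Finset.sum_mul, Finset.mul_sum]
      refine Finset.sum_congr rfl fun w _ => ?_
      rw [Algebra.TensorProduct.tmul_mul_tmul, mul_one,
        Algebra.TensorProduct.tmul_mul_tmul, one_mul]
    have hsp : ∀ u : A, s (epsL k A u) = ∑ w ∈ S, epsL k A w.1 ⊗ₜ[k] (epsL k A w.2 * epsL k A u) := by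
      intro u
      rw [hs', hcas u, hp2, Finset.sum_mul]
      refine Finset.sum_congr rfl fun w _ => ?_
      rw [Algebra.TensorProduct.tmul_mul_tmul, mul_one]
    rw [hsa, map_sum, map_sum, map_sum]
    simp only [TensorProduct.map_tmul, LinearMap.id_coe, id_eq]
    have lhsz : ∀ z ∈ S, (TensorProduct.assoc k A A A) (s (epsL k A y * epsL k A z.1) ⊗ₜ[k] epsL k A z.2)
        = ∑ w ∈ S, (epsL k A y * epsL k A w.1) ⊗ₜ[k]
            ((epsL k A w.2 * epsL k A z.1) ⊗ₜ[k] epsL k A z.2) := by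
      intro z _
      rw [hcomp z.1, TensorProduct.sum_tmul, map_sum]
      simp only [TensorProduct.assoc_tmul]
    have rhsz : ∀ z ∈ S, ((epsL k A y * epsL k A z.1) ⊗ₜ[k] s (epsL k A z.2))
        = ∑ w ∈ S, (epsL k A y * epsL k A z.1) ⊗ₜ[k]
            (epsL k A w.1 ⊗ₜ[k] (epsL k A w.2 * epsL k A z.2)) := by
      intro z _
      rw [hsp z.2, TensorProduct.tmul_sum]
    rw [Finset.sum_congr rfl lhsz, Finset.sum_congr rfl rhsz, Finset.sum_comm]
    refine Finset.sum_congr rfl fun w _ => ?_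
    rw [← TensorProduct.tmul_sum, ← TensorProduct.tmul_sum]
    congr 1
    calc ∑ z ∈ S, (epsL k A w.2 * epsL k A z.1) ⊗ₜ[k] epsL k A z.2
        = (epsL k A w.2 ⊗ₜ[k] (1 : A)) * ∑ z ∈ S, epsL k A z.1 ⊗ₜ[k] epsL k A z.2 := by
          rw [Finset.mul_sum]
          refine Finset.sum_congr rfl fun z _ => ?_
          rw [Algebra.TensorProduct.tmul_mul_tmul, one_mul]
      _ = (epsL k A w.2 ⊗ₜ[k] (1 : A)) * p := by rw [← hp2]
      _ = p * ((1 : A) ⊗ₜ[k] epsL k A w.2) := hcas w.2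
      _ = ∑ z ∈ S, epsL k A z.1 ⊗ₜ[k] (epsL k A z.2 * epsL k A w.2) := by
          rw [hp2, Finset.sum_mul]
          refine Finset.sum_congr rfl fun z _ => ?_
          rw [Algebra.TensorProduct.tmul_mul_tmul, mul_one]
  · -- separability
    rintro x ⟨y, rfl⟩
    rw [hs', hp', Finset.mul_sum, map_sum]
    simp only [Algebra.TensorProduct.tmul_mul_tmul, one_mul, LinearMap.mul'_apply]
    have e1 : ∀ z ∈ S, epsL k A y * epsL k A z.1 * z.2 = epsL k A y * (epsL k A z.1 * z.2) := by
      intro z _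
      rw [mul_assoc]
    rw [Finset.sum_congr rfl e1, ← Finset.mul_sum]
    have e2 : ∑ z ∈ S, epsL k A z.1 * z.2 = (1 : A) := by
      have := WeakBialgebraAux.mulP_one S hd h
      rw [map_sum] at this
      simpa only [LinearMap.mul'_apply] using this
    rw [e2, mul_one]
end

section
/- Let F : C → D be a Frobenius monoidal functor between monoidal categories, and suppose X ∈ C has a left dual (X^L, ev : X^L ⊗ X → 1, coev : 1 → X ⊗ X^L). Then F(X^L) is a left dual of F(X) in D, with evaluation F₋₀ ∘ F(ev) ∘ F₂ : F(X^L) ⊗ F(X) → 1' and coevaluation F₋₂ ∘ F(coev) ∘ F₀ : 1' → F(X) ⊗ F(X^L). -/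
open CategoryTheory MonoidalCategory

/-!
Naturality of `μ` and `δ` together with one Frobenius condition rewrites the zigzag composite
built from `F Y`, `μ ≫ F.map ev` and `F.map coev ≫ δ` as `μ ≫ F.map (zigzag in C) ≫ δ`.
The zigzag identity in `C` turns the middle into `F.map (ρ.hom ≫ λ.inv)`, and the unit laws of
the lax and oplax structures absorb `η` and `ν` on either side.
-/

section Frobenius

variable {C D : Type*} [Category C] [Category D] [MonoidalCategory C] [MonoidalCategory D]
  (F : C ⥤ D) (μ : ∀ X Y : C, F.obj X ⊗ F.obj Y ⟶ F.obj (X ⊗ Y))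
  (δ : ∀ X Y : C, F.obj (X ⊗ Y) ⟶ F.obj X ⊗ F.obj Y)

theorem whiskerLeft_map_comp_frobenius_comp_whiskerRight_map
    (μ_nat : ∀ {X Y X' Y' : C} (f : X ⟶ X') (g : Y ⟶ Y'),
      (F.map f ⊗ₘ F.map g) ≫ μ X' Y' = μ X Y ≫ F.map (f ⊗ₘ g))
    (δ_nat : ∀ {X Y X' Y' : C} (f : X ⟶ X') (g : Y ⟶ Y'),
      F.map (f ⊗ₘ g) ≫ δ X' Y' = δ X Y ≫ (F.map f ⊗ₘ F.map g))
    (frob₂ : ∀ X Y Z : C,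
      μ X (Y ⊗ Z) ≫ F.map (α_ X Y Z).inv ≫ δ (X ⊗ Y) Z
        = (F.obj X ◁ δ Y Z) ≫ (α_ (F.obj X) (F.obj Y) (F.obj Z)).inv ≫ (μ X Y ▷ F.obj Z))
    {A B X Y : C} (f : A ⟶ X ⊗ Y) (g : Y ⊗ X ⟶ B) :
    (F.obj Y ◁ (F.map f ≫ δ X Y)) ≫ (α_ (F.obj Y) (F.obj X) (F.obj Y)).inv ≫
        ((μ Y X ≫ F.map g) ▷ F.obj Y)
      = μ Y A ≫ F.map ((Y ◁ f) ≫ (α_ Y X Y).inv ≫ (g ▷ Y)) ≫ δ B Y := by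
  have μ_whiskerLeft : (F.obj Y ◁ F.map f) ≫ μ Y (X ⊗ Y) = μ Y A ≫ F.map (Y ◁ f) := by
    simpa using μ_nat (𝟙 Y) f
  have δ_whiskerRight : F.map (g ▷ Y) ≫ δ B Y = δ (Y ⊗ X) Y ≫ (F.map g ▷ F.obj Y) := by
    simpa using δ_nat g (𝟙 Y)
  calc _ = (F.obj Y ◁ F.map f) ≫ ((F.obj Y ◁ δ X Y) ≫ (α_ (F.obj Y) (F.obj X) (F.obj Y)).inv ≫
          (μ Y X ▷ F.obj Y)) ≫ (F.map g ▷ F.obj Y) := by simp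
    _ = _ := by rw [← frob₂, Category.assoc, reassoc_of% μ_whiskerLeft]; simp [δ_whiskerRight]

theorem whiskerRight_map_comp_frobenius_comp_whiskerLeft_map
    (μ_nat : ∀ {X Y X' Y' : C} (f : X ⟶ X') (g : Y ⟶ Y'),
      (F.map f ⊗ₘ F.map g) ≫ μ X' Y' = μ X Y ≫ F.map (f ⊗ₘ g))
    (δ_nat : ∀ {X Y X' Y' : C} (f : X ⟶ X') (g : Y ⟶ Y'),
      F.map (f ⊗ₘ g) ≫ δ X' Y' = δ X Y ≫ (F.map f ⊗ₘ F.map g))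
    (frob₁ : ∀ X Y Z : C,
      μ (X ⊗ Y) Z ≫ F.map (α_ X Y Z).hom ≫ δ X (Y ⊗ Z)
        = (δ X Y ▷ F.obj Z) ≫ (α_ (F.obj X) (F.obj Y) (F.obj Z)).hom ≫ (F.obj X ◁ μ Y Z))
    {A B X Y : C} (f : A ⟶ X ⊗ Y) (g : Y ⊗ X ⟶ B) :
    ((F.map f ≫ δ X Y) ▷ F.obj X) ≫ (α_ (F.obj X) (F.obj Y) (F.obj X)).hom ≫
        (F.obj X ◁ (μ Y X ≫ F.map g))
      = μ A X ≫ F.map ((f ▷ X) ≫ (α_ X Y X).hom ≫ (X ◁ g)) ≫ δ X B := by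
  have μ_whiskerRight : (F.map f ▷ F.obj X) ≫ μ (X ⊗ Y) X = μ A X ≫ F.map (f ▷ X) := by
    simpa using μ_nat f (𝟙 X)
  have δ_whiskerLeft : F.map (X ◁ g) ≫ δ X B = δ X (Y ⊗ X) ≫ (F.obj X ◁ F.map g) := by
    simpa using δ_nat (𝟙 X) g
  calc _ = (F.map f ▷ F.obj X) ≫ ((δ X Y ▷ F.obj X) ≫ (α_ (F.obj X) (F.obj Y) (F.obj X)).hom ≫
          (F.obj X ◁ μ Y X)) ≫ (F.obj X ◁ F.map g) := by simp
    _ = _ := by rw [← frob₁, Category.assoc, reassoc_of% μ_whiskerRight]; simp [δ_whiskerLeft]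

end Frobenius

theorem frobenius_monoidal_preserves_left_duals_general
    {C D : Type*} [Category C] [Category D] [MonoidalCategory C] [MonoidalCategory D]
    (F : C ⥤ D)
    (μ : ∀ X Y : C, F.obj X ⊗ F.obj Y ⟶ F.obj (X ⊗ Y))
    (η : 𝟙_ D ⟶ F.obj (𝟙_ C))
    (δ : ∀ X Y : C, F.obj (X ⊗ Y) ⟶ F.obj X ⊗ F.obj Y)
    (ν : F.obj (𝟙_ C) ⟶ 𝟙_ D)
    -- naturality of the lax and oplax structures
    (μ_nat : ∀ {X Y X' Y' : C} (f : X ⟶ X') (g : Y ⟶ Y'),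
      (F.map f ⊗ₘ F.map g) ≫ μ X' Y' = μ X Y ≫ F.map (f ⊗ₘ g))
    (δ_nat : ∀ {X Y X' Y' : C} (f : X ⟶ X') (g : Y ⟶ Y'),
      F.map (f ⊗ₘ g) ≫ δ X' Y' = δ X Y ≫ (F.map f ⊗ₘ F.map g))
    -- lax associativity and unitality
    (μ_unit_left : ∀ X : C,
      (η ▷ F.obj X) ≫ μ (𝟙_ C) X ≫ F.map (λ_ X).hom = (λ_ (F.obj X)).hom)
    (μ_unit_right : ∀ X : C,
      (F.obj X ◁ η) ≫ μ X (𝟙_ C) ≫ F.map (ρ_ X).hom = (ρ_ (F.obj X)).hom)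
    -- oplax associativity and unitality
    (δ_unit_left : ∀ X : C,
      F.map (λ_ X).inv ≫ δ (𝟙_ C) X ≫ (ν ▷ F.obj X) = (λ_ (F.obj X)).inv)
    (δ_unit_right : ∀ X : C,
      F.map (ρ_ X).inv ≫ δ X (𝟙_ C) ≫ (F.obj X ◁ ν) = (ρ_ (F.obj X)).inv)
    -- the two Frobenius conditions
    (frob₁ : ∀ X Y Z : C,
      μ (X ⊗ Y) Z ≫ F.map (α_ X Y Z).hom ≫ δ X (Y ⊗ Z)
        = (δ X Y ▷ F.obj Z) ≫ (α_ (F.obj X) (F.obj Y) (F.obj Z)).hom ≫ (F.obj X ◁ μ Y Z))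
    (frob₂ : ∀ X Y Z : C,
      μ X (Y ⊗ Z) ≫ F.map (α_ X Y Z).inv ≫ δ (X ⊗ Y) Z
        = (F.obj X ◁ δ Y Z) ≫ (α_ (F.obj X) (F.obj Y) (F.obj Z)).inv ≫ (μ X Y ▷ F.obj Z))
    -- a left dual (Y, ev, coev) of X in C
    (X Y : C) (ev : Y ⊗ X ⟶ 𝟙_ C) (coev : 𝟙_ C ⟶ X ⊗ Y)
    (zig₁ : (Y ◁ coev) ≫ (α_ Y X Y).inv ≫ (ev ▷ Y) = (ρ_ Y).hom ≫ (λ_ Y).inv)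
    (zig₂ : (coev ▷ X) ≫ (α_ X Y X).hom ≫ (X ◁ ev) = (λ_ X).hom ≫ (ρ_ X).inv) :
    -- then (F Y, Ev, Coev) is a left dual of F X in D
    ((F.obj Y ◁ (η ≫ F.map coev ≫ δ X Y)) ≫ (α_ (F.obj Y) (F.obj X) (F.obj Y)).inv ≫
        ((μ Y X ≫ F.map ev ≫ ν) ▷ F.obj Y)
      = (ρ_ (F.obj Y)).hom ≫ (λ_ (F.obj Y)).inv) ∧
    (((η ≫ F.map coev ≫ δ X Y) ▷ F.obj X) ≫ (α_ (F.obj X) (F.obj Y) (F.obj X)).hom ≫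
        (F.obj X ◁ (μ Y X ≫ F.map ev ≫ ν))
      = (λ_ (F.obj X)).hom ≫ (ρ_ (F.obj X)).inv) := by
  constructor
  · calc _ = (F.obj Y ◁ η) ≫ ((F.obj Y ◁ (F.map coev ≫ δ X Y)) ≫
            (α_ (F.obj Y) (F.obj X) (F.obj Y)).inv ≫ ((μ Y X ≫ F.map ev) ▷ F.obj Y)) ≫
            (ν ▷ F.obj Y) := by simp
      _ = ((F.obj Y ◁ η) ≫ μ Y (𝟙_ C) ≫ F.map (ρ_ Y).hom) ≫
            (F.map (λ_ Y).inv ≫ δ (𝟙_ C) Y ≫ (ν ▷ F.obj Y)) := by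
          rw [whiskerLeft_map_comp_frobenius_comp_whiskerRight_map F μ δ μ_nat δ_nat frob₂, zig₁]
          simp
      _ = _ := by rw [μ_unit_right, δ_unit_left]
  · calc _ = (η ▷ F.obj X) ≫ (((F.map coev ≫ δ X Y) ▷ F.obj X) ≫
            (α_ (F.obj X) (F.obj Y) (F.obj X)).hom ≫ (F.obj X ◁ (μ Y X ≫ F.map ev))) ≫
            (F.obj X ◁ ν) := by simp
      _ = ((η ▷ F.obj X) ≫ μ (𝟙_ C) X ≫ F.map (λ_ X).hom) ≫
            (F.map (ρ_ X).inv ≫ δ X (𝟙_ C) ≫ (F.obj X ◁ ν)) := by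
          rw [whiskerRight_map_comp_frobenius_comp_whiskerLeft_map F μ δ μ_nat δ_nat frob₁, zig₂]
          simp
      _ = _ := by rw [μ_unit_left, δ_unit_right]

/-- A Frobenius monoidal functor `F : C ⥤ D` (a functor with a lax
monoidal structure `(μ, η)` and an oplax monoidal structure `(δ, ν)` satisfying the two
Frobenius compatibility conditions) preserves left duals: if `(Y, ev, coev)` exhibits `Y`
as a left dual of `X` in `C`, then `F Y` is a left dual of `F X` in `D`, with evaluation
`μ ≫ F.map ev ≫ ν` and coevaluation `η ≫ F.map coev ≫ δ` (i.e. these satisfy the zigzag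
identities). -/
theorem frobenius_monoidal_preserves_left_duals
    {C D : Type*} [Category C] [Category D] [MonoidalCategory C] [MonoidalCategory D]
    (F : C ⥤ D)
    (μ : ∀ X Y : C, F.obj X ⊗ F.obj Y ⟶ F.obj (X ⊗ Y))
    (η : 𝟙_ D ⟶ F.obj (𝟙_ C))
    (δ : ∀ X Y : C, F.obj (X ⊗ Y) ⟶ F.obj X ⊗ F.obj Y)
    (ν : F.obj (𝟙_ C) ⟶ 𝟙_ D)
    -- naturality of the lax and oplax structures
    (μ_nat : ∀ {X Y X' Y' : C} (f : X ⟶ X') (g : Y ⟶ Y'),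
      (F.map f ⊗ₘ F.map g) ≫ μ X' Y' = μ X Y ≫ F.map (f ⊗ₘ g))
    (δ_nat : ∀ {X Y X' Y' : C} (f : X ⟶ X') (g : Y ⟶ Y'),
      F.map (f ⊗ₘ g) ≫ δ X' Y' = δ X Y ≫ (F.map f ⊗ₘ F.map g))
    -- lax associativity and unitality
    (μ_assoc : ∀ X Y Z : C,
      (μ X Y ▷ F.obj Z) ≫ μ (X ⊗ Y) Z ≫ F.map (α_ X Y Z).hom
        = (α_ (F.obj X) (F.obj Y) (F.obj Z)).hom ≫ (F.obj X ◁ μ Y Z) ≫ μ X (Y ⊗ Z))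
    (μ_unit_left : ∀ X : C,
      (η ▷ F.obj X) ≫ μ (𝟙_ C) X ≫ F.map (λ_ X).hom = (λ_ (F.obj X)).hom)
    (μ_unit_right : ∀ X : C,
      (F.obj X ◁ η) ≫ μ X (𝟙_ C) ≫ F.map (ρ_ X).hom = (ρ_ (F.obj X)).hom)
    -- oplax associativity and unitality
    (δ_assoc : ∀ X Y Z : C,
      F.map (α_ X Y Z).hom ≫ δ X (Y ⊗ Z) ≫ (F.obj X ◁ δ Y Z)
        = δ (X ⊗ Y) Z ≫ (δ X Y ▷ F.obj Z) ≫ (α_ (F.obj X) (F.obj Y) (F.obj Z)).hom)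
    (δ_unit_left : ∀ X : C,
      F.map (λ_ X).inv ≫ δ (𝟙_ C) X ≫ (ν ▷ F.obj X) = (λ_ (F.obj X)).inv)
    (δ_unit_right : ∀ X : C,
      F.map (ρ_ X).inv ≫ δ X (𝟙_ C) ≫ (F.obj X ◁ ν) = (ρ_ (F.obj X)).inv)
    -- the two Frobenius conditions
    (frob₁ : ∀ X Y Z : C,
      μ (X ⊗ Y) Z ≫ F.map (α_ X Y Z).hom ≫ δ X (Y ⊗ Z)
        = (δ X Y ▷ F.obj Z) ≫ (α_ (F.obj X) (F.obj Y) (F.obj Z)).hom ≫ (F.obj X ◁ μ Y Z))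
    (frob₂ : ∀ X Y Z : C,
      μ X (Y ⊗ Z) ≫ F.map (α_ X Y Z).inv ≫ δ (X ⊗ Y) Z
        = (F.obj X ◁ δ Y Z) ≫ (α_ (F.obj X) (F.obj Y) (F.obj Z)).inv ≫ (μ X Y ▷ F.obj Z))
    -- a left dual (Y, ev, coev) of X in C
    (X Y : C) (ev : Y ⊗ X ⟶ 𝟙_ C) (coev : 𝟙_ C ⟶ X ⊗ Y)
    (zig₁ : (Y ◁ coev) ≫ (α_ Y X Y).inv ≫ (ev ▷ Y) = (ρ_ Y).hom ≫ (λ_ Y).inv)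
    (zig₂ : (coev ▷ X) ≫ (α_ X Y X).hom ≫ (X ◁ ev) = (λ_ X).hom ≫ (ρ_ X).inv) :
    -- then (F Y, Ev, Coev) is a left dual of F X in D
    ((F.obj Y ◁ (η ≫ F.map coev ≫ δ X Y)) ≫ (α_ (F.obj Y) (F.obj X) (F.obj Y)).inv ≫
        ((μ Y X ≫ F.map ev ≫ ν) ▷ F.obj Y)
      = (ρ_ (F.obj Y)).hom ≫ (λ_ (F.obj Y)).inv) ∧
    (((η ≫ F.map coev ≫ δ X Y) ▷ F.obj X) ≫ (α_ (F.obj X) (F.obj Y) (F.obj X)).hom ≫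
        (F.obj X ◁ (μ Y X ≫ F.map ev ≫ ν))
      = (λ_ (F.obj X)).hom ≫ (ρ_ (F.obj X)).inv) :=
  frobenius_monoidal_preserves_left_duals_general F μ η δ ν μ_nat δ_nat μ_unit_left μ_unit_right
    δ_unit_left δ_unit_right frob₁ frob₂ X Y ev coev zig₁ zig₂
end
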